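/- If a cyclically ordered group (G,R) contains a copy of the group U of all roots of unity (with its inherited cyclic order from K = {z \in C : |z| = 1}), then every c-convex subgroup C of G is pure in G: for every x \in C, n \in N, and y \in G with y^n = x, there exists y' \in C with y'^n = x. -/

import Mathlib

/-- A cyclically ordered group: a ternary relation satisfying R1-R5. -/
def IsCyclicOrder {G : Type*} [Group G] (R : G → G → G → Prop) : Prop :=
  (∀ x y z : G, R x y z → x ≠ y ∧ y ≠ z ∧ z ≠ x) ∧
  (∀ x y z : G, x ≠ y → y ≠ z → z ≠ x → R x y z ∨ R x z y) ∧
  (∀ x y z : G, R x y z → R y z x) ∧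
  (∀ x y z u : G, R x y z → R y u z → R x u z) ∧
  (∀ x y z u v : G, R x y z → R (u * x * v) (u * y * v) (u * z * v))

/-- A subgroup of a cyclically ordered group is c-convex if it is the whole
group, or it is proper, contains no non-identity element of order `2`, and is a
c-convex set: `R h⁻¹ 1 h` and `R 1 g h` with `h ∈ H` imply `g ∈ H`. -/
def IsCConvex {G : Type*} [Group G] (R : G → G → G → Prop) (H : Subgroup G) : Prop :=
  H = ⊤ ∨ (H ≠ ⊤ ∧ (∀ h ∈ H, h ^ 2 = 1 → h = 1) ∧
    ∀ h ∈ H, ∀ g : G, R h⁻¹ 1 h → R 1 g h → g ∈ H)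

/-- The argument of a unimodular complex number, normalized to `[0, 2π)`. -/
noncomputable def circleTheta (u : Circle) : ℝ :=
  if Complex.arg (u : ℂ) < 0 then Complex.arg (u : ℂ) + 2 * Real.pi
  else Complex.arg (u : ℂ)

/-- The standard cyclic order on the unit circle `K ⊆ ℂ`, via arguments in
`[0, 2π)`. -/
def circleR (a b c : Circle) : Prop :=
  (circleTheta a < circleTheta b ∧ circleTheta b < circleTheta c) ∨
  (circleTheta b < circleTheta c ∧ circleTheta c < circleTheta a) ∨
  (circleTheta c < circleTheta a ∧ circleTheta a < circleTheta b)

open Real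

set_option linter.unusedSectionVars false
set_option maxHeartbeats 1000000

namespace CCP

lemma theta_nonneg (u : Circle) : 0 ≤ circleTheta u := by
  unfold circleTheta; split
  · have := Complex.neg_pi_lt_arg (u : ℂ); linarith [Real.pi_pos]
  · linarith [not_lt.mp ‹¬ Complex.arg (u:ℂ) < 0›]

lemma theta_lt (u : Circle) : circleTheta u < 2*π := by
  unfold circleTheta; split
  · linarith [Real.pi_pos, ‹Complex.arg (u:ℂ) < 0›]
  · have := Complex.arg_le_pi (u : ℂ); linarith [Real.pi_pos]

lemma exp_theta (u : Circle) : Circle.exp (circleTheta u) = u := by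
  unfold circleTheta; split
  · rw [Circle.exp_add_two_pi]; exact Circle.exp_arg u
  · exact Circle.exp_arg u

lemma theta_exp {t : ℝ} (h0 : 0 ≤ t) (h1 : t < 2*π) : circleTheta (Circle.exp t) = t := by
  rcases le_or_gt t π with h | h
  · unfold circleTheta
    rw [Circle.arg_exp (by linarith [Real.pi_pos]) h]
    rw [if_neg (by linarith)]
  · have : Circle.exp t = Circle.exp (t - 2*π) := (Circle.exp_sub_two_pi t).symm
    rw [this]
    unfold circleTheta
    rw [Circle.arg_exp (by linarith) (by linarith [Real.pi_pos])]
    rw [if_pos (by linarith)]; ring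

lemma theta_inj {u v : Circle} (h : circleTheta u = circleTheta v) : u = v := by
  rw [← exp_theta u, ← exp_theta v, h]

lemma theta_one : circleTheta 1 = 0 := by
  unfold circleTheta
  rw [Circle.coe_one, Complex.arg_one]
  simp

lemma theta_eq_zero {u : Circle} (h : circleTheta u = 0) : u = 1 :=
  theta_inj (h.trans theta_one.symm)

lemma theta_pos {u : Circle} (h : u ≠ 1) : 0 < circleTheta u := by
  rcases (theta_nonneg u).lt_or_eq with h' | h'
  · exact h'
  · exact absurd (theta_eq_zero h'.symm) h

lemma theta_mul_lt {u v : Circle} (h : circleTheta u + circleTheta v < 2*π) :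
    circleTheta (u*v) = circleTheta u + circleTheta v := by
  have : u * v = Circle.exp (circleTheta u + circleTheta v) := by
    rw [Circle.exp_add, exp_theta, exp_theta]
  rw [this]; exact theta_exp (by linarith [theta_nonneg u, theta_nonneg v]) h

lemma theta_inv {u : Circle} (h : u ≠ 1) : circleTheta u⁻¹ = 2*π - circleTheta u := by
  have : u⁻¹ = Circle.exp (2*π - circleTheta u) := by
    rw [Circle.exp_sub, Circle.exp_two_pi, exp_theta]; simp
  rw [this, theta_exp (by linarith [theta_lt u]) (by linarith [theta_pos h])]


variable {G : Type*} [Group G] {R : G → G → G → Prop}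

/-- associated strict linear order with `1` as bottom. -/
def rlt (R : G → G → G → Prop) (a b : G) : Prop := (a = 1 ∧ b ≠ 1) ∨ R 1 a b

section ord
variable (hR : IsCyclicOrder R)
include hR

lemma Rcyc {x y z : G} (h : R x y z) : R y z x := hR.2.2.1 _ _ _ h
lemma Rne {x y z : G} (h : R x y z) : x ≠ y ∧ y ≠ z ∧ z ≠ x := hR.1 _ _ _ h
lemma Rtot {x y z : G} (h1 : x ≠ y) (h2 : y ≠ z) (h3 : z ≠ x) : R x y z ∨ R x z y :=
  hR.2.1 _ _ _ h1 h2 h3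
lemma Rtrans {x y z u : G} (h1 : R x y z) (h2 : R y u z) : R x u z := hR.2.2.2.1 _ _ _ _ h1 h2
lemma Rmul {x y z : G} (u v : G) (h : R x y z) : R (u*x*v) (u*y*v) (u*z*v) :=
  hR.2.2.2.2 _ _ _ _ _ h

lemma Rmull {x y z : G} (u : G) (h : R x y z) : R (u*x) (u*y) (u*z) := by
  have := Rmul hR u 1 h; simpa using this

lemma Rmulr {x y z : G} (v : G) (h : R x y z) : R (x*v) (y*v) (z*v) := by
  have := Rmul hR 1 v h; simpa using this

lemma Rasym {x y z : G} (h : R x y z) (h' : R x z y) : False := by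
  have h2 : R y x z := Rcyc hR (Rcyc hR h')
  have := Rtrans hR h h2
  exact (Rne hR this).1 rfl

lemma rlt_one_right {a : G} : ¬ rlt R a 1 := by
  rintro (⟨rfl, h⟩ | h)
  · exact h rfl
  · exact (Rne hR h).2.2 rfl

omit hR in
lemma rlt_one_left {a : G} (h : a ≠ 1) : rlt R 1 a := Or.inl ⟨rfl, h⟩

lemma rlt_ne {a b : G} (h : rlt R a b) : a ≠ b := by
  rcases h with ⟨rfl, h⟩ | h
  · exact fun e => h e.symm
  · exact (Rne hR h).2.1

lemma rlt_ne_one {a b : G} (h : rlt R a b) : b ≠ 1 := by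
  rcases h with ⟨_, h⟩ | h
  · exact h
  · exact fun e => (Rne hR h).2.2 (e ▸ rfl)

lemma R_one_trans {a b c : G} (h1 : R 1 a b) (h2 : R 1 b c) : R 1 a c := by
  have := Rtrans hR (Rcyc hR h1) (Rcyc hR h2)
  exact Rcyc hR (Rcyc hR this)

lemma rlt_trans {a b c : G} (h1 : rlt R a b) (h2 : rlt R b c) : rlt R a c := by
  rcases h1 with ⟨rfl, hb⟩ | h1
  · exact rlt_one_left (rlt_ne_one hR h2)
  · rcases h2 with ⟨rfl, _⟩ | h2
    · exact absurd h1 (fun h => (Rne hR h).2.2 rfl)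
    · exact Or.inr (R_one_trans hR h1 h2)

lemma rlt_asymm {a b : G} (h1 : rlt R a b) (h2 : rlt R b a) : False := by
  have := rlt_trans hR h1 h2
  exact rlt_ne hR this rfl

lemma rlt_total {a b : G} (h : a ≠ b) : rlt R a b ∨ rlt R b a := by
  by_cases ha : a = 1
  · subst ha; exact Or.inl (rlt_one_left (Ne.symm h))
  · by_cases hb : b = 1
    · subst hb; exact Or.inr (rlt_one_left ha)
    · rcases Rtot hR (Ne.symm ha) h hb with h' | h'
      · exact Or.inl (Or.inr h')
      · exact Or.inr (Or.inr h')

lemma R_of_rlt {a b c : G} (h1 : rlt R a b) (h2 : rlt R b c) : R a b c := by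
  rcases h1 with ⟨rfl, hb⟩ | h1
  · rcases h2 with ⟨rfl, _⟩ | h2
    · exact absurd rfl hb
    · exact h2
  · rcases h2 with ⟨rfl, _⟩ | h2
    · exact absurd h1 (fun h => (Rne hR h).2.2 rfl)
    · -- R 1 a b, R 1 b c ⊢ R a b c
      have hz : R c 1 b := Rcyc hR (Rcyc hR h2)
      have := Rtrans hR hz h1   -- R c a b
      exact Rcyc hR this

/-- translation between R and the linear order -/
lemma tr {x y z : G} : R x y z ↔
    (rlt R x y ∧ rlt R y z) ∨ (rlt R y z ∧ rlt R z x) ∨ (rlt R z x ∧ rlt R x y) := by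
  constructor
  · intro h
    obtain ⟨hxy, hyz, hzx⟩ := Rne hR h
    rcases rlt_total hR hxy with h1 | h1 <;> rcases rlt_total hR hyz with h2 | h2 <;>
      rcases rlt_total hR (Ne.symm hzx) with h3 | h3
    · exact Or.inl ⟨h1, h2⟩
    · exact Or.inl ⟨h1, h2⟩
    · exact absurd (R_of_rlt hR h3 h2) (Rasym hR h)
    · exact Or.inr (Or.inr ⟨h3, h1⟩)
    · exact absurd (R_of_rlt hR h1 h3) (Rasym hR (Rcyc hR h))
    · exact Or.inr (Or.inl ⟨h2, h3⟩)
    · exact absurd (rlt_trans hR (rlt_trans hR h3 h2) h1) (fun hh => rlt_ne hR hh rfl)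
    · exact absurd (R_of_rlt hR h2 h1) (Rasym hR (Rcyc hR (Rcyc hR h)))
  · rintro (⟨h1, h2⟩ | ⟨h1, h2⟩ | ⟨h1, h2⟩)
    · exact R_of_rlt hR h1 h2
    · exact Rcyc hR (Rcyc hR (R_of_rlt hR h1 h2))
    · exact Rcyc hR (R_of_rlt hR h1 h2)

omit hR in
lemma rlt_of_R {a b : G} (h : R 1 a b) : rlt R a b := Or.inr h

omit hR in
lemma R_one_of_rlt {a b : G} (ha : a ≠ 1) (h : rlt R a b) : R 1 a b := by
  rcases h with ⟨h, _⟩ | h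
  · exact absurd h ha
  · exact h

/-- inversion reverses the order -/
lemma inv_rlt {p q : G} (h : R 1 p q) : R 1 q⁻¹ p⁻¹ := by
  have hp : p ≠ 1 := fun e => (Rne hR h).1 e.symm
  have hq : q ≠ 1 := (Rne hR h).2.2
  have hpq : p ≠ q := (Rne hR h).2.1
  -- auxiliary derivation: from R 1 p q and R 1 p⁻¹ q⁻¹ we get rlt q⁻¹ q
  have key : ∀ p' q' : G, R 1 p' q' → R 1 p'⁻¹ q'⁻¹ → rlt R q'⁻¹ q' := by
    intro p' q' h1 h2
    -- (i) from h2 left-mult p' : R p' 1 (p' q'⁻¹)  → R 1 (p' q'⁻¹) p'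
    have i1 : R p' 1 (p' * q'⁻¹) := by
      have := Rmull hR p' h2
      simpa [mul_assoc] using this
    have i1' : R 1 (p' * q'⁻¹) p' := Rcyc hR i1
    -- (ii) from h1 right-mult q'⁻¹ : R q'⁻¹ (p' q'⁻¹) 1 → R 1 q'⁻¹ (p' q'⁻¹)
    have i2 : R q'⁻¹ (p' * q'⁻¹) 1 := by
      have := Rmulr hR q'⁻¹ h1
      simpa [mul_assoc] using this
    have i2' : R 1 q'⁻¹ (p' * q'⁻¹) := Rcyc hR (Rcyc hR i2)
    have l1 : rlt R q'⁻¹ (p' * q'⁻¹) := Or.inr i2'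
    have l2 : rlt R (p' * q'⁻¹) p' := Or.inr i1'
    have l3 : rlt R p' q' := Or.inr h1
    exact rlt_trans hR (rlt_trans hR l1 l2) l3
  by_contra hcon
  have hq1 : q⁻¹ ≠ 1 := by simpa using hq
  have hp1 : p⁻¹ ≠ 1 := by simpa using hp
  have hne : q⁻¹ ≠ p⁻¹ := by simpa using (Ne.symm hpq)
  rcases Rtot hR (Ne.symm hq1) hne hp1 with h' | h'
  · exact hcon h'
  · -- h' : R 1 p⁻¹ q⁻¹
    have k1 := key p q h h'
    have k2 := key p⁻¹ q⁻¹ h' (by simpa using h)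
    simp only [inv_inv] at k2
    exact rlt_asymm hR k1 k2

lemma inv_R {x y z : G} (h : R x y z) : R z⁻¹ y⁻¹ x⁻¹ := by
  have h1 : R 1 (x⁻¹*y) (x⁻¹*z) := by
    have := Rmull hR x⁻¹ h; simpa using this
  have h2 := inv_rlt hR h1
  simp only [mul_inv_rev, inv_inv] at h2
  -- h2 : R 1 (z⁻¹ * x) (y⁻¹ * x)
  have h3 := Rmulr hR x⁻¹ h2
  simpa [mul_assoc] using Rcyc hR h3

end ord

section ctx
variable {G : Type*} [Group G] {R : G → G → G → Prop} {U : Subgroup Circle}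
variable (hR : IsCyclicOrder R) (f : U →* G) (hf : Function.Injective f)
variable (hord : ∀ a b c : U, circleR (a : Circle) (b : Circle) (c : Circle) ↔
      R (f a) (f b) (f c))

/-- the angle of an element of U -/
noncomputable def thU (u : U) : ℝ := circleTheta (u : Circle)

omit hR in
lemma thU_nonneg (u : U) : 0 ≤ thU u := theta_nonneg _

omit hR in
lemma thU_lt (u : U) : thU u < 2*π := theta_lt _

omit hR in
lemma thU_one : thU (1 : U) = 0 := theta_one

omit hR in
lemma thU_eq_zero {u : U} (h : thU u = 0) : u = 1 :=
  Subtype.ext ((theta_eq_zero h).trans rfl)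

omit hR in
lemma thU_pos {u : U} (h : u ≠ 1) : 0 < thU u :=
  theta_pos (fun e => h (Subtype.ext e))

omit hR in
lemma thU_inj {u v : U} (h : thU u = thU v) : u = v := Subtype.ext (theta_inj h)

omit hR in
lemma thU_mul {u v : U} (h : thU u + thU v < 2*π) :
    thU (u*v) = thU u + thU v := theta_mul_lt h

omit hR in
lemma thU_inv {u : U} (h : u ≠ 1) : thU u⁻¹ = 2*π - thU u :=
  theta_inv (fun e => h (Subtype.ext e))

include hf in
lemma f_ne_one {u : U} (h : u ≠ 1) : f u ≠ 1 := by
  intro e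
  exact h (hf (e.trans (map_one f).symm))

include hR hf hord

lemma ltF {u v : U} : rlt R (f u) (f v) ↔ thU u < thU v := by
  by_cases hu : u = 1
  · subst hu
    rw [map_one]
    constructor
    · intro h
      rcases h with ⟨_, hb⟩ | h
      · have : v ≠ 1 := fun e => hb (by rw [e, map_one])
        rw [thU_one]; exact thU_pos this
      · have : v ≠ 1 := by
          intro e; rw [e, map_one] at h; exact (hR.1 _ _ _ h).2.2 rfl
        rw [thU_one]; exact thU_pos this
    · intro h
      rw [thU_one] at h
      have : v ≠ 1 := fun e => by rw [e, thU_one] at h; exact lt_irrefl _ h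
      exact rlt_one_left (f_ne_one f hf this)
  · by_cases hv : v = 1
    · subst hv
      rw [map_one]
      constructor
      · intro h; exact absurd h (rlt_one_right hR)
      · intro h
        rw [thU_one] at h
        exact absurd h (not_lt.mpr (thU_nonneg u))
    · by_cases huv : u = v
      · subst huv
        constructor
        · intro h; exact absurd rfl (rlt_ne hR h)
        · intro h; exact absurd rfl (ne_of_lt h)
      · have h1 : rlt R (f u) (f v) ↔ R 1 (f u) (f v) := by
          constructor
          · intro h
            exact R_one_of_rlt (f_ne_one f hf hu) h
          · exact rlt_of_R
        rw [h1, ← map_one f, ← hord]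
        unfold circleR
        rw [show circleTheta ((1:U) : Circle) = 0 from theta_one]
        have h2 := thU_pos hu
        have h3 := thU_nonneg v
        have h4 := thU_pos hv
        unfold thU at h2 h3 h4
        constructor
        · rintro (⟨p, q⟩ | ⟨p, q⟩ | ⟨p, q⟩) <;> unfold thU <;> linarith
        · intro h; left; exact ⟨h2, h⟩

lemma widen {g : G} {v w : U} (h : R 1 g (f v)) (hvw : thU v ≤ thU w) :
    R 1 g (f w) := by
  rcases hvw.lt_or_eq with h' | h'
  · have hg : g ≠ 1 := fun e => (hR.1 _ _ _ h).1 (by rw [e])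
    exact R_one_of_rlt hg
      (rlt_trans hR (rlt_of_R h) ((ltF hR f hf hord).2 h'))
  · rwa [thU_inj h'] at h

/-- The key multiplication lemma: arcs starting at 1 add up. -/
lemma mul_lt {a b : G} {u v w : U} (ha : R 1 a (f u)) (hb : R 1 b (f v))
    (hsum : thU u + thU v < thU w) : R 1 (a*b) (f w) := by
  have hune : u ≠ 1 := by
    intro e; rw [e, map_one] at ha; exact (hR.1 _ _ _ ha).2.2 rfl
  have hvne : v ≠ 1 := by
    intro e; rw [e, map_one] at hb; exact (hR.1 _ _ _ hb).2.2 rfl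
  have hu0 := thU_pos hune
  have hv0 := thU_pos hvne
  have hw2 := thU_lt w
  have huv : thU (u*v) = thU u + thU v := thU_mul (by linarith)
  -- root order facts
  have luv_w : rlt R (f (u*v)) (f w) := (ltF hR f hf hord).2 (by rw [huv]; linarith)
  have lv_uv : rlt R (f v) (f (u*v)) := (ltF hR f hf hord).2 (by rw [huv]; linarith)
  have lu_uv : rlt R (f u) (f (u*v)) := (ltF hR f hf hord).2 (by rw [huv]; linarith)
  have la : rlt R a (f u) := rlt_of_R ha
  have lb : rlt R b (f v) := rlt_of_R hb
  -- translated facts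
  have F1 : R a (a*b) (a * f v) := by
    have := Rmull hR a hb; simpa using this
  have F2 : R (f v) (a * f v) (f (u*v)) := by
    have := Rmulr hR (f v) ha
    simpa [map_mul] using this
  have F3 : R b (a*b) (f u * b) := by
    have := Rmulr hR b ha; simpa using this
  have F4 : R (f u) (f u * b) (f (u*v)) := by
    have := Rmull hR (f u) hb
    simpa [map_mul] using this
  have d2 : rlt R (f v) (a * f v) ∧ rlt R (a * f v) (f (u*v)) := by
    rcases (tr hR).1 F2 with ⟨p, q⟩ | ⟨p, q⟩ | ⟨p, q⟩
    · exact ⟨p, q⟩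
    · exact absurd q (fun hh => rlt_asymm hR hh lv_uv)
    · exact absurd p (fun hh => rlt_asymm hR hh lv_uv)
  have d4 : rlt R (f u) (f u * b) ∧ rlt R (f u * b) (f (u*v)) := by
    rcases (tr hR).1 F4 with ⟨p, q⟩ | ⟨p, q⟩ | ⟨p, q⟩
    · exact ⟨p, q⟩
    · exact absurd q (fun hh => rlt_asymm hR hh lu_uv)
    · exact absurd p (fun hh => rlt_asymm hR hh lu_uv)
  have hab : a * b ≠ 1 := by
    intro e
    rw [e] at F1 F3
    have e1 : rlt R (a * f v) a := by
      rcases (tr hR).1 F1 with ⟨p, q⟩ | ⟨p, q⟩ | ⟨p, q⟩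
      · exact absurd p (rlt_one_right hR)
      · exact q
      · exact absurd q (rlt_one_right hR)
    have e2 : rlt R (f u * b) b := by
      rcases (tr hR).1 F3 with ⟨p, q⟩ | ⟨p, q⟩ | ⟨p, q⟩
      · exact absurd p (rlt_one_right hR)
      · exact q
      · exact absurd q (rlt_one_right hR)
    have : rlt R a a :=
      rlt_trans hR (rlt_trans hR (rlt_trans hR (rlt_trans hR (rlt_trans hR la d4.1) e2) lb) d2.1) e1
    exact rlt_ne hR this rfl
  refine R_one_of_rlt hab ?_
  rcases (tr hR).1 F1 with ⟨p, q⟩ | ⟨p, q⟩ | ⟨p, q⟩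
  · exact rlt_trans hR q (rlt_trans hR d2.2 luv_w)
  · exact rlt_trans hR p (rlt_trans hR d2.2 luv_w)
  · -- p : rlt (a * f v) a, q : rlt a (a*b)
    rcases (tr hR).1 F3 with ⟨p', q'⟩ | ⟨p', q'⟩ | ⟨p', q'⟩
    · exact rlt_trans hR q' (rlt_trans hR d4.2 luv_w)
    · exact rlt_trans hR p' (rlt_trans hR d4.2 luv_w)
    · -- p' : rlt (f u * b) b
      exfalso
      have : rlt R a a :=
        rlt_trans hR (rlt_trans hR (rlt_trans hR (rlt_trans hR (rlt_trans hR la d4.1) p') lb) d2.1) p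
      exact rlt_ne hR this rfl

omit hR hf hord in
lemma U_comm (a b : U) : a * b = b * a := mul_comm a b

/-- conjugation by elements of the image of f preserves arcs at 1 -/
lemma conj_presL {g : G} {c v : U} (h : R 1 g (f v)) :
    R 1 ((f c)⁻¹ * g * f c) (f v) := by
  have h2 := Rmul hR (f c)⁻¹ (f c) h
  have e1 : (f c)⁻¹ * 1 * f c = 1 := by group
  have e3 : (f c)⁻¹ * f v * f c = f v := by
    rw [← map_inv, ← map_mul, ← map_mul,
      show (c⁻¹ * v * c : U) = v by rw [mul_comm c⁻¹ v, mul_assoc, inv_mul_cancel, mul_one]]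
  rwa [e1, e3] at h2

lemma conj_presR {g : G} {c v : U} (h : R 1 g (f v)) :
    R 1 (f c * g * (f c)⁻¹) (f v) := by
  have h2 := Rmul hR (f c) (f c)⁻¹ h
  have e1 : f c * 1 * (f c)⁻¹ = 1 := by group
  have e3 : f c * f v * (f c)⁻¹ = f v := by
    rw [← map_inv, ← map_mul, ← map_mul,
      show (c * v * c⁻¹ : U) = v by rw [mul_comm c v, mul_assoc, mul_inv_cancel, mul_one]]
  rwa [e1, e3] at h2

omit hR hf hord in
lemma thU_pow {ξ : U} (j : ℕ) (h : (j:ℝ) * thU ξ < 2*π) :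
    thU (ξ^j) = j * thU ξ := by
  induction j with
  | zero => simp [pow_zero, thU_one]
  | succ m ih =>
    have hθ := thU_nonneg ξ
    have hm : (m:ℝ) * thU ξ < 2*π := by
      push_cast at h ⊢; nlinarith
    rw [pow_succ, thU_mul, ih hm]
    · push_cast; ring
    · rw [ih hm]; push_cast at h ⊢; nlinarith

/-- expansion of (f w * g)^n -/
lemma expand_left {w ξ : U} {g : G} (n : ℕ) (hn : 1 ≤ n) (hg : R 1 g (f ξ))
    (hbound : (2*(n:ℝ)) * thU ξ < 2*π) :
    ∃ Q : G, (f w * g)^n = f (w^n) * Q ∧ R 1 Q (f (ξ^(2*n))) := by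
  have hξne : ξ ≠ 1 := by
    intro e; rw [e, map_one] at hg; exact (hR.1 _ _ _ hg).2.2 rfl
  have hθpos := thU_pos hξne
  have hθn := thU_nonneg ξ
  induction n with
  | zero => omega
  | succ m ih =>
    rcases Nat.eq_or_lt_of_le hn with h1 | h1
    · -- m + 1 = 1
      have hm0 : m = 0 := by omega
      subst hm0
      refine ⟨g, by simp [pow_one], ?_⟩
      have h2 : thU ξ ≤ thU (ξ^(2*1)) := by
        rw [thU_pow 2 (by push_cast at hbound ⊢; nlinarith)]
        push_cast; nlinarith
      exact widen hR f hf hord hg h2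
    · have hm1 : 1 ≤ m := by omega
      have hbm : (2*(m:ℝ)) * thU ξ < 2*π := by
        push_cast at hbound ⊢; nlinarith
      obtain ⟨Q, hQ, hQlt⟩ := ih hm1 hbm
      refine ⟨(f (w^m))⁻¹ * g * f (w^m) * Q, ?_, ?_⟩
      · rw [pow_succ' (f w * g) m, hQ]
        simp only [map_pow]
        group
      · have hc : R 1 ((f (w^m))⁻¹ * g * f (w^m)) (f ξ) := conj_presL hR f hf hord hg
        have hsum : thU ξ + thU (ξ^(2*m)) < thU (ξ^(2*(m+1))) := by
          rw [thU_pow (2*m) (by push_cast at hbound ⊢; nlinarith),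
            thU_pow (2*(m+1)) (by push_cast at hbound ⊢; nlinarith)]
          push_cast; nlinarith
        exact mul_lt hR f hf hord hc hQlt hsum

/-- expansion of (g * f w)^n -/
lemma expand_right {w ξ : U} {g : G} (n : ℕ) (hn : 1 ≤ n) (hg : R 1 g (f ξ))
    (hbound : (2*(n:ℝ)) * thU ξ < 2*π) :
    ∃ Q : G, (g * f w)^n = Q * f (w^n) ∧ R 1 Q (f (ξ^(2*n))) := by
  have hξne : ξ ≠ 1 := by
    intro e; rw [e, map_one] at hg; exact (hR.1 _ _ _ hg).2.2 rfl
  have hθpos := thU_pos hξne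
  have hθn := thU_nonneg ξ
  induction n with
  | zero => omega
  | succ m ih =>
    rcases Nat.eq_or_lt_of_le hn with h1 | h1
    · have hm0 : m = 0 := by omega
      subst hm0
      refine ⟨g, by simp [pow_one], ?_⟩
      have h2 : thU ξ ≤ thU (ξ^(2*1)) := by
        rw [thU_pow 2 (by push_cast at hbound ⊢; nlinarith)]
        push_cast; nlinarith
      exact widen hR f hf hord hg h2
    · have hm1 : 1 ≤ m := by omega
      have hbm : (2*(m:ℝ)) * thU ξ < 2*π := by
        push_cast at hbound ⊢; nlinarith
      obtain ⟨Q, hQ, hQlt⟩ := ih hm1 hbm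
      refine ⟨Q * (f (w^m) * g * (f (w^m))⁻¹), ?_, ?_⟩
      · rw [pow_succ (g * f w) m, hQ]
        simp only [map_pow]
        group
      · have hc : R 1 (f (w^m) * g * (f (w^m))⁻¹) (f ξ) := conj_presR hR f hf hord hg
        have hsum : thU (ξ^(2*m)) + thU ξ < thU (ξ^(2*(m+1))) := by
          rw [thU_pow (2*m) (by push_cast at hbound ⊢; nlinarith),
            thU_pow (2*(m+1)) (by push_cast at hbound ⊢; nlinarith)]
          push_cast; nlinarith
        exact mul_lt hR f hf hord hQlt hc hsum

/-- every element is on a root of unity or strictly between consecutive ones -/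
lemma partition (K : ℕ) (hK2 : 2 ≤ K) (ξ : U) (hK1 : ξ^K = 1)
    (hnt : ∀ k : ℕ, 0 < k → k < K → (ξ^k : U) ≠ 1) (g : G) :
    ∃ k, k < K ∧ (g = f (ξ^k) ∨ R (f (ξ^k)) g (f (ξ^(k+1)))) := by
  classical
  by_cases hg : g = 1
  · exact ⟨0, by omega, Or.inl (by rw [hg, pow_zero, map_one])⟩
  · set S : Finset ℕ := (Finset.range K).filter
      (fun k => g = f (ξ^k) ∨ rlt R (f (ξ^k)) g) with hS
    have h0 : 0 ∈ S := by
      rw [hS]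
      refine Finset.mem_filter.2 ⟨Finset.mem_range.2 (by omega), Or.inr ?_⟩
      rw [pow_zero, map_one]
      exact rlt_one_left hg
    have hSne : S.Nonempty := ⟨0, h0⟩
    set k := S.max' hSne with hk
    have hkS : k ∈ S := S.max'_mem hSne
    have hkK : k < K := Finset.mem_range.1 (Finset.mem_filter.1 hkS).1
    rcases (Finset.mem_filter.1 hkS).2 with he | hlt
    · exact ⟨k, hkK, Or.inl he⟩
    · refine ⟨k, hkK, Or.inr ?_⟩
      rcases Nat.eq_or_lt_of_le (Nat.succ_le_of_lt hkK) with hke | hke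
      · -- k+1 = K
        have : (ξ^(k+1) : U) = 1 := by rw [show k+1 = K from hke, hK1]
        rw [this, map_one]
        refine (tr hR).2 (Or.inr (Or.inr ⟨?_, hlt⟩))
        have hk0 : 0 < k := by omega
        exact rlt_one_left (f_ne_one f hf (hnt k hk0 hkK))
      · -- k+1 < K
        have hnot : k+1 ∉ S := by
          intro hmem
          have := S.le_max' (k+1) hmem
          omega
        rw [hS] at hnot
        simp only [Finset.mem_filter, Finset.mem_range, not_and, not_or] at hnot
        obtain ⟨hne1, hne2⟩ := hnot hke
        have hgne : g ≠ f (ξ^(k+1)) := hne1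
        rcases rlt_total hR hgne with h' | h'
        · exact (tr hR).2 (Or.inl ⟨hlt, h'⟩)
        · exact absurd h' hne2

end ctx

section roots
variable {U : Subgroup Circle}
variable (hU : ∀ u : Circle, u ∈ U ↔ ∃ n : ℕ, 0 < n ∧ u ^ n = 1)

lemma exp_pow (t : ℝ) (n : ℕ) : (Circle.exp t)^n = Circle.exp (n * t) := by
  induction n with
  | zero => simp [Circle.exp_zero]
  | succ m ih =>
    rw [pow_succ, ih, ← Circle.exp_add]
    congr 1
    push_cast; ring

lemma exp_nat_two_pi (k : ℕ) : Circle.exp (2*π*k) = 1 :=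
  Circle.exp_eq_one.2 ⟨k, by push_cast; ring⟩

include hU in
lemma rU_mem (k m : ℕ) (hm : 0 < m) : Circle.exp (2*π*k/m) ∈ U := by
  refine (hU _).2 ⟨m, hm, ?_⟩
  rw [exp_pow]
  have : (m:ℝ) * (2*π*k/m) = 2*π*k := by
    field_simp
  rw [this, exp_nat_two_pi]

/-- root of unity as an element of U -/
noncomputable def rU (k m : ℕ) (hm : 0 < m) : U :=
  ⟨Circle.exp (2*π*k/m), rU_mem hU k m hm⟩

lemma rU_coe (k m : ℕ) (hm : 0 < m) : ((rU hU k m hm : U) : Circle) = Circle.exp (2*π*k/m) := rfl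

lemma rU_th (k m : ℕ) (hm : 0 < m) (hkm : k < m) :
    circleTheta ((rU hU k m hm : U) : Circle) = 2*π*k/m := by
  rw [rU_coe]
  refine theta_exp ?_ ?_
  · positivity
  · rw [div_lt_iff₀ (by positivity)]
    have h1 : (k:ℝ) < m := by exact_mod_cast hkm
    nlinarith [Real.pi_pos]

lemma rU_pow (k m j : ℕ) (hm : 0 < m) :
    ((rU hU k m hm : U) ^ j : U) = rU hU (k*j) m hm := by
  apply Subtype.ext
  push_cast [rU_coe]
  rw [exp_pow]
  congr 1
  push_cast; ring


include hU in
lemma rU_eqR {k1 m1 k2 m2 : ℕ} (h1 : 0 < m1) (h2 : 0 < m2)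
    (he : 2*π*(k1:ℝ)/m1 = 2*π*(k2:ℝ)/m2) :
    rU hU k1 m1 h1 = rU hU k2 m2 h2 := by
  apply Subtype.ext
  rw [rU_coe, rU_coe, he]

include hU in
lemma rU_add {a b m : ℕ} (hm : 0 < m) :
    rU hU a m hm * rU hU b m hm = rU hU (a+b) m hm := by
  apply Subtype.ext
  push_cast [rU_coe]
  rw [← Circle.exp_add]
  congr 1
  push_cast
  ring

include hU in
lemma rU_self {m : ℕ} (hm : 0 < m) : rU hU m m hm = 1 := by
  apply Subtype.ext
  rw [rU_coe]
  have e : (2*π*(m:ℝ)/(m:ℝ)) = 2*π := by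
    field_simp
  rw [e, Circle.exp_two_pi]
  simp

include hU in
lemma rU_inv {a m : ℕ} (hm : 0 < m) (ha : a ≤ m) :
    (rU hU a m hm)⁻¹ = rU hU (m - a) m hm := by
  apply Subtype.ext
  rw [show (((rU hU a m hm)⁻¹ : U) : Circle) = ((rU hU a m hm : U) : Circle)⁻¹ from rfl,
    rU_coe, rU_coe, ← Circle.exp_neg, Circle.exp_eq_exp]
  refine ⟨-1, ?_⟩
  have hmR : (0:ℝ) < m := by exact_mod_cast hm
  have haR : ((m - a : ℕ):ℝ) = (m:ℝ) - a := by
    push_cast [Nat.cast_sub ha]; ring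
  rw [haR]
  field_simp
  ring

include hU in
lemma thU_rU {k m : ℕ} (hm : 0 < m) (hkm : k < m) :
    thU (rU hU k m hm) = 2*π*k/m := rU_th hU k m hm hkm

end roots

section nball
variable {G : Type*} [Group G] {R : G → G → G → Prop} {U : Subgroup Circle}
variable (hR : IsCyclicOrder R) (f : U →* G) (hf : Function.Injective f)
variable (hord : ∀ a b c : U, circleR (a : Circle) (b : Circle) (c : Circle) ↔
      R (f a) (f b) (f c))
variable (hU : ∀ u : Circle, u ∈ U ↔ ∃ n : ℕ, 0 < n ∧ u ^ n = 1)

/-- "positive infinitesimal relative to roots of unity" -/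
def Npos (R : G → G → G → Prop) (f : U →* G) (g : G) : Prop :=
  ∀ u : U, 0 < thU u → thU u < π → R 1 g (f u)

include hU in
lemma small_exists (r : ℝ) (hr : 0 < r) :
    ∃ u : U, 0 < thU u ∧ thU u ≤ r ∧ thU u < π := by
  set K : ℕ := max 4 ⌈2*π/r⌉₊ with hK
  have hK4 : 4 ≤ K := le_max_left _ _
  have hK0 : 0 < K := by omega
  have hKc : (2*π/r : ℝ) ≤ K := le_trans (Nat.le_ceil _) (by exact_mod_cast le_max_right _ _)
  refine ⟨rU hU 1 K hK0, ?_, ?_, ?_⟩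
  · show 0 < circleTheta _
    rw [rU_th hU 1 K hK0 (by omega)]
    have : (0:ℝ) < K := by exact_mod_cast hK0
    positivity
  · show circleTheta _ ≤ r
    rw [rU_th hU 1 K hK0 (by omega)]
    have hKpos : (0:ℝ) < K := by exact_mod_cast hK0
    rw [div_le_iff₀ hKpos]
    rw [div_le_iff₀ hr] at hKc
    push_cast
    nlinarith
  · show circleTheta _ < π
    rw [rU_th hU 1 K hK0 (by omega)]
    have hKpos : (4:ℝ) ≤ K := by exact_mod_cast hK4
    rw [div_lt_iff₀ (by linarith)]
    push_cast
    nlinarith [Real.pi_pos]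

include hR hf hord in
lemma exclusive {g : G} {u u' : U} (h1 : R 1 g (f u)) (h2 : R 1 g⁻¹ (f u'))
    (hu : thU u < π) (hu' : thU u' < π) : False := by
  have hu'ne : u' ≠ 1 := by
    intro e; rw [e, map_one] at h2; exact (hR.1 _ _ _ h2).2.2 rfl
  have h3 := inv_rlt hR h2
  rw [inv_inv, ← map_inv] at h3
  have l1 : rlt R (f u'⁻¹) g := rlt_of_R h3
  have l2 : rlt R g (f u) := rlt_of_R h1
  have := (ltF hR f hf hord).1 (rlt_trans hR l1 l2)
  rw [thU_inv hu'ne] at this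
  linarith

include hR hf hord hU in
lemma upgrade {g : G}
    (h : ∀ u : U, 0 < thU u → thU u < π → (g = 1 ∨ R 1 g (f u) ∨ R 1 g⁻¹ (f u))) :
    g = 1 ∨ Npos R f g ∨ Npos R f g⁻¹ := by
  by_cases hg : g = 1
  · exact Or.inl hg
  · obtain ⟨u₀, hu₀1, _, hu₀3⟩ := small_exists hU π Real.pi_pos
    rcases h u₀ hu₀1 hu₀3 with h' | hp | hm
    · exact Or.inl h'
    · refine Or.inr (Or.inl ?_)
      intro u hu1 hu2
      obtain ⟨v, hv1, hv2, hv3⟩ := small_exists hU (min (thU u) π)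
        (lt_min hu1 Real.pi_pos)
      rcases h v hv1 hv3 with h' | h' | h'
      · exact absurd h' hg
      · exact widen hR f hf hord h' (le_trans hv2 (min_le_left _ _))
      · exact absurd (exclusive hR f hf hord hp h' hu₀3 hv3) (fun x => x)
    · refine Or.inr (Or.inr ?_)
      intro u hu1 hu2
      obtain ⟨v, hv1, hv2, hv3⟩ := small_exists hU (min (thU u) π)
        (lt_min hu1 Real.pi_pos)
      rcases h v hv1 hv3 with h' | h' | h'
      · exact absurd h' hg
      · exact absurd (exclusive hR f hf hord h' hm hv3 hu₀3) (fun x => x)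
      · exact widen hR f hf hord h' (le_trans hv2 (min_le_left _ _))

variable (C : Subgroup G) (h2t : ∀ h ∈ C, h ^ 2 = 1 → h = 1)
variable (hconv : ∀ h ∈ C, ∀ g : G, R h⁻¹ 1 h → R 1 g h → g ∈ C)
variable (hCne : C ≠ ⊤)

include hR hf hord hU h2t hconv hCne in
lemma no_root : ∀ z : U, f z ∈ C → z = 1 := by
  intro z hz
  by_contra hzne
  have hθ0 := thU_pos hzne
  have hθ2 := thU_lt z
  -- key : a small positive element of C in the image of f gives C = ⊤
  have key : ∀ u : U, u ≠ 1 → thU u < π → f u ∈ C → False := by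
    intro u hune huπ hfuC
    have hu0 := thU_pos hune
    have hpiv : R (f u)⁻¹ 1 (f u) := by
      have hcr : circleR ((u⁻¹ : U) : Circle) ((1 : U) : Circle) ((u : U) : Circle) := by
        unfold circleR
        rw [show ((1:U) : Circle) = 1 from rfl, theta_one,
          show circleTheta ((u⁻¹ : U) : Circle) = 2*π - thU u from thU_inv hune]
        have e : thU u = circleTheta ((u : U) : Circle) := rfl
        exact Or.inr (Or.inl ⟨by linarith, by linarith⟩)
      have := (hord u⁻¹ 1 u).1 hcr
      rwa [map_inv, map_one] at this
    have mem_small : ∀ g : G, R 1 g (f u) → g ∈ C := fun g hg => hconv (f u) hfuC g hpiv hg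
    set K : ℕ := ⌈2*π/thU u⌉₊ + 1 with hKdef
    have hK0 : 0 < K := by omega
    have hKgt : (2*π/thU u : ℝ) < K := by
      have := Nat.le_ceil (2*π/thU u)
      push_cast [hKdef]
      linarith
    have hKR : (0:ℝ) < K := by exact_mod_cast hK0
    have hθξ : 2*π/K < thU u := by
      rw [div_lt_iff₀ hKR]
      rw [div_lt_iff₀ hu0] at hKgt
      nlinarith
    have hK2 : 2 ≤ K := by
      have h2' : (2:ℝ) < 2*π/thU u := by
        rw [lt_div_iff₀ hu0]; nlinarith [Real.pi_pos]
      have h3' : (2:ℝ) < K := by linarith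
      have : 2 < K := by exact_mod_cast h3'
      omega
    set ξ : U := rU hU 1 K hK0 with hξdef
    have hξθ : thU ξ = 2*π/K := by
      show circleTheta _ = _
      rw [hξdef, rU_th hU 1 K hK0 (by omega)]
      norm_num
    have hξu : thU ξ < thU u := by rw [hξθ]; exact hθξ
    have hξpos : 0 < thU ξ := by rw [hξθ]; positivity
    have hξne : ξ ≠ 1 := fun e => by rw [e, thU_one] at hξpos; exact lt_irrefl _ hξpos
    have hξC : f ξ ∈ C := by
      apply mem_small
      have hcr : circleR ((1 : U) : Circle) ((ξ : U) : Circle) ((u : U) : Circle) := by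
        unfold circleR
        rw [show ((1:U) : Circle) = 1 from rfl, theta_one]
        exact Or.inl ⟨hξpos, hξu⟩
      have := (hord 1 ξ u).1 hcr
      rwa [map_one] at this
    have hK1 : ξ^K = 1 := by
      rw [hξdef, rU_pow hU 1 K K hK0]
      apply Subtype.ext
      rw [rU_coe]
      have e : (2*π*((1*K : ℕ):ℝ)/(K:ℝ)) = 2*π := by
        push_cast
        field_simp
      rw [e, Circle.exp_two_pi]
      simp
    have hnt : ∀ k : ℕ, 0 < k → k < K → (ξ^k : U) ≠ 1 := by
      intro k hk1 hk2 e
      have h0 : thU (ξ^k) = 0 := by rw [e, thU_one]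
      rw [hξdef, rU_pow hU 1 K k hK0] at h0
      have e2 : thU (rU hU (1*k) K hK0) = 2*π*((1*k:ℕ):ℝ)/K :=
        rU_th hU (1*k) K hK0 (by simpa using hk2)
      rw [e2] at h0
      have hkR : (0:ℝ) < ((1*k : ℕ):ℝ) := by exact_mod_cast (by omega : 0 < 1*k)
      have hpos : (0:ℝ) < 2*π*((1*k:ℕ):ℝ)/K := by positivity
      linarith
    apply hCne
    rw [Subgroup.eq_top_iff']
    intro g
    rcases partition hR f hf hord K hK2 ξ hK1 hnt g with ⟨k, hkK, hcase | hcase⟩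
    · rw [hcase, map_pow]; exact pow_mem hξC k
    · have hR1 : R 1 ((f (ξ^k))⁻¹ * g) (f ξ) := by
        have h2 := Rmull hR (f (ξ^k))⁻¹ hcase
        have e1 : (f (ξ^k))⁻¹ * f (ξ^k) = 1 := by group
        have e3 : (f (ξ^k))⁻¹ * f (ξ^(k+1)) = f ξ := by
          rw [← map_inv, ← map_mul]
          congr 1
          rw [pow_succ, inv_mul_cancel_left]
        rwa [e1, e3] at h2
      have h'C : (f (ξ^k))⁻¹ * g ∈ C :=
        mem_small _ (widen hR f hf hord hR1 hξu.le)
      have : g = f (ξ^k) * ((f (ξ^k))⁻¹ * g) := by group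
      rw [this]
      exact mul_mem (by rw [map_pow]; exact pow_mem hξC k) h'C
  -- apply key to z or z⁻¹
  by_cases hθπ : thU z = π
  · -- z = -1, order two
    have hz2 : (z^2 : U) = 1 := by
      apply Subtype.ext
      have hcz : (z : Circle) = Circle.exp π := by
        have h' := exp_theta (z : Circle)
        rw [show circleTheta (z:Circle) = π from hθπ] at h'
        exact h'.symm
      have e0 : ((z^2 : U) : Circle) = ((z : Circle))^2 := by push_cast; ring
      rw [e0, hcz, exp_pow]
      have e : ((2:ℕ):ℝ) * π = 2*π := by push_cast; ring
      rw [e, Circle.exp_two_pi]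
      simp
    have : (f z)^2 = 1 := by rw [← map_pow, hz2, map_one]
    have := h2t (f z) hz this
    exact hzne (hf (this.trans (map_one f).symm))
  · rcases lt_or_gt_of_ne hθπ with hlt | hgt
    · exact key z hzne hlt hz
    · have h1 : (z⁻¹ : U) ≠ 1 := by simpa using hzne
      have h2 : thU (z⁻¹) < π := by rw [thU_inv hzne]; linarith
      have h3 : f z⁻¹ ∈ C := by rw [map_inv]; exact inv_mem hz
      exact key z⁻¹ h1 h2 h3

include hR hf hord hU h2t hconv hCne in
lemma C_ball : ∀ h ∈ C, h = 1 ∨ Npos R f h ∨ Npos R f h⁻¹ := by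
  intro h hh
  apply upgrade hR f hf hord hU
  intro u hu1 hu2
  by_contra hcon
  push_neg at hcon
  obtain ⟨hne1, hnR1, hnR2⟩ := hcon
  have hune : u ≠ 1 := fun e => by rw [e, thU_one] at hu1; exact lt_irrefl _ hu1
  have hfune : f u ≠ 1 := f_ne_one f hf hune
  have lt1 : rlt R (f u) h := by
    have hne : h ≠ f u := by
      intro e
      exact hune (no_root hR f hf hord hU C h2t hconv hCne u (e ▸ hh))
    rcases rlt_total hR hne with h' | h'
    · exact absurd (R_one_of_rlt hne1 h') hnR1
    · exact h'
  have lt2 : rlt R (f u) h⁻¹ := by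
    have hne : h⁻¹ ≠ f u := by
      intro e
      exact hune (no_root hR f hf hord hU C h2t hconv hCne u (e ▸ inv_mem hh))
    rcases rlt_total hR hne with h' | h'
    · exact absurd (R_one_of_rlt (by simpa using hne1) h') hnR2
    · exact h'
  have hne : h ≠ h⁻¹ := by
    intro e
    refine hne1 (h2t h hh ?_)
    rw [pow_two]
    nth_rewrite 2 [e]
    group
  rcases rlt_total hR hne with hc1 | hc1
  · have hpiv : R h⁻¹ 1 h := (tr hR).2 (Or.inr (Or.inl ⟨rlt_one_left hne1, hc1⟩))
    have := hconv h hh (f u) hpiv (R_one_of_rlt hfune lt1)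
    exact hune (no_root hR f hf hord hU C h2t hconv hCne u this)
  · have hpiv : R (h⁻¹)⁻¹ 1 (h⁻¹) :=
      (tr hR).2 (Or.inr (Or.inl ⟨rlt_one_left (by simpa using hne1), by rwa [inv_inv]⟩))
    have := hconv h⁻¹ (inv_mem hh) (f u) hpiv (R_one_of_rlt hfune lt2)
    exact hune (no_root hR f hf hord hU C h2t hconv hCne u this)

include hR hf hord hU in
lemma ball_f_eq_one {σ : U}
    (h : f σ = 1 ∨ Npos R f (f σ) ∨ Npos R f (f σ)⁻¹) : σ = 1 := by
  have key : ∀ τ : U, Npos R f (f τ) → τ = 1 := by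
    intro τ hτ
    by_contra hne
    have hθ := thU_pos (u := τ) hne
    obtain ⟨v, hv1, hv2, hv3⟩ := small_exists hU (min (thU τ) π) (lt_min hθ Real.pi_pos)
    have := (ltF hR f hf hord).1 (rlt_of_R (hτ v hv1 hv3))
    have h2 := min_le_left (thU τ) π
    linarith
  rcases h with h | h | h
  · exact hf (h.trans (map_one f).symm)
  · exact key σ h
  · rw [← map_inv] at h
    have := key σ⁻¹ h
    simpa using this

include hR hf hord hU in
lemma sub_contra {M : ℕ} (hM8 : 8 ≤ M) (hM0 : 0 < M) {z : G} {j : ℕ}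
    (hj1 : 1 ≤ j) (hj2 : j + 2 ≤ M)
    (harc : R (f (rU hU j M hM0)) z (f (rU hU (j+2) M hM0)))
    (hpos : Npos R f z) : False := by
  have hMR : (0:ℝ) < M := by exact_mod_cast hM0
  have hjR : (1:ℝ) ≤ (j:ℝ) := by exact_mod_cast hj1
  have hθj : thU (rU hU j M hM0) = 2*π*j/M := thU_rU hU hM0 (by omega)
  have hθjpos : 0 < thU (rU hU j M hM0) := by
    rw [hθj]; positivity
  have hd1 : rlt R (f (rU hU j M hM0)) z := by
    rcases Nat.eq_or_lt_of_le hj2 with he | hlt2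
    · rw [show rU hU (j+2) M hM0 = 1 by rw [show j+2 = M from he]; exact rU_self hU hM0,
        map_one] at harc
      rcases (tr hR).1 harc with ⟨p, q⟩ | ⟨p, q⟩ | ⟨p, q⟩
      · exact absurd q (rlt_one_right hR)
      · exact absurd p (rlt_one_right hR)
      · exact q
    · have hθj2 : thU (rU hU (j+2) M hM0) = 2*π*((j+2:ℕ):ℝ)/M := thU_rU hU hM0 (by omega)
      have ltEE : rlt R (f (rU hU j M hM0)) (f (rU hU (j+2) M hM0)) := by
        refine (ltF hR f hf hord).2 ?_
        rw [hθj, hθj2]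
        rw [div_lt_div_iff_of_pos_right hMR]
        push_cast
        nlinarith [Real.pi_pos]
      rcases (tr hR).1 harc with ⟨p, q⟩ | ⟨p, q⟩ | ⟨p, q⟩
      · exact p
      · exact absurd q (fun hh => rlt_asymm hR hh ltEE)
      · exact absurd p (fun hh => rlt_asymm hR hh ltEE)
  by_cases hsmall : thU (rU hU j M hM0) < π
  · have := hpos (rU hU j M hM0) hθjpos hsmall
    exact rlt_asymm hR (rlt_of_R this) hd1
  · push_neg at hsmall
    have h40 : (0:ℕ) < 4 := by omega
    have hθ4 := thU_rU hU h40 (show (1:ℕ) < 4 by omega)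
    have h4pos : 0 < thU (rU hU 1 4 h40) := by rw [hθ4]; positivity
    have h4pi : thU (rU hU 1 4 h40) < π := by
      rw [hθ4]; push_cast; nlinarith [Real.pi_pos]
    have l1 : rlt R z (f (rU hU 1 4 h40)) := rlt_of_R (hpos _ h4pos h4pi)
    have l2 : rlt R (f (rU hU 1 4 h40)) (f (rU hU j M hM0)) := by
      refine (ltF hR f hf hord).2 ?_
      rw [hθ4, hθj]
      rw [hθj] at hsmall
      push_cast
      push_cast at hsmall
      nlinarith [Real.pi_pos]
    exact rlt_ne hR (rlt_trans hR (rlt_trans hR l1 l2) hd1) rfl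

include hR hf hord hU in
lemma find_zeta (n : ℕ) (hn : 1 ≤ n) (y : G)
    (hxball : y^n = 1 ∨ Npos R f (y^n) ∨ Npos R f (y^n)⁻¹)
    (u : U) (hu1 : 0 < thU u) (hu2 : thU u < π) :
    ∃ ζ : U, ζ^n = 1 ∧ ((f ζ)⁻¹ * y = 1 ∨ R 1 ((f ζ)⁻¹ * y) (f u) ∨
      R 1 ((f ζ)⁻¹ * y)⁻¹ (f u)) := by
  have hnR : (1:ℝ) ≤ (n:ℝ) := by exact_mod_cast hn
  set M : ℕ := max 8 (⌈2*π/(thU u * n)⌉₊ + 1) with hMdef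
  have hM8 : 8 ≤ M := le_max_left _ _
  have hM0 : 0 < M := lt_of_lt_of_le (by norm_num) hM8
  have hMR : (0:ℝ) < M := by exact_mod_cast hM0
  have hMbig : 2*π/(thU u * n) < M := by
    have h1 : (⌈2*π/(thU u * n)⌉₊ + 1 : ℕ) ≤ M := le_max_right _ _
    have h2 := Nat.le_ceil (2*π/(thU u * n))
    have h3 : ((⌈2*π/(thU u * n)⌉₊ + 1 : ℕ) : ℝ) ≤ M := by exact_mod_cast h1
    push_cast at h3
    linarith
  set N : ℕ := n * M with hNdef
  have hN8 : 8 ≤ N := by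
    calc 8 = 1*8 := by omega
    _ ≤ n*M := Nat.mul_le_mul hn hM8
  have hN0 : 0 < N := by omega
  have hNR : (0:ℝ) < N := by exact_mod_cast hN0
  have hNcast : (N:ℝ) = n * M := by rw [hNdef]; push_cast; ring
  have hNθ : 2*π/N < thU u := by
    rw [div_lt_iff₀ hNR]
    rw [div_lt_iff₀ (by positivity)] at hMbig
    nlinarith
  set ξ : U := rU hU 1 N hN0 with hξdef
  have hξθ : thU ξ = 2*π/N := by
    rw [hξdef, thU_rU hU hN0 (by omega)]
    push_cast
    ring
  have hξpos : 0 < thU ξ := by rw [hξθ]; positivity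
  have hK1 : ξ^N = 1 := by
    rw [hξdef, rU_pow hU 1 N N hN0, show 1*N = N by omega]
    exact rU_self hU hN0
  have hnt : ∀ k : ℕ, 0 < k → k < N → (ξ^k : U) ≠ 1 := by
    intro k hk1 hk2 e
    have h0 : thU (ξ^k) = 0 := by rw [e, thU_one]
    rw [hξdef, rU_pow hU 1 N k hN0] at h0
    rw [thU_rU hU hN0 (by simpa using hk2)] at h0
    have hkR : (0:ℝ) < ((1*k : ℕ):ℝ) := by exact_mod_cast (by omega : 0 < 1*k)
    have hpos2 : (0:ℝ) < 2*π*((1*k:ℕ):ℝ)/N := by positivity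
    linarith
  have hbound : (2*(n:ℝ)) * thU ξ < 2*π := by
    rw [hξθ, hNcast]
    have h8 : (8:ℝ) ≤ M := by exact_mod_cast hM8
    rw [div_eq_mul_inv]
    have hinv : ((n:ℝ) * M)⁻¹ ≤ (8*n:ℝ)⁻¹ := by
      apply inv_anti₀ (by positivity)
      nlinarith
    have : (2*(n:ℝ)) * (2*π * ((n:ℝ)*M)⁻¹) ≤ (2*(n:ℝ)) * (2*π * (8*n:ℝ)⁻¹) := by
      have hπ := Real.pi_pos
      apply mul_le_mul_of_nonneg_left _ (by positivity)
      apply mul_le_mul_of_nonneg_left hinv (by positivity)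
    have he : (2*(n:ℝ)) * (2*π * (8*n:ℝ)⁻¹) = π/2 := by
      field_simp
      ring
    nlinarith [Real.pi_pos]
  rcases partition hR f hf hord N (by omega) ξ hK1 hnt y with ⟨k, hkN, hcase | harc⟩
  · have hx : y^n = f ((ξ^k)^n) := by rw [hcase, ← map_pow]
    have hσ : ((ξ^k)^n : U) = 1 := by
      apply ball_f_eq_one hR f hf hord hU
      rw [← hx]
      exact hxball
    refine ⟨ξ^k, hσ, Or.inl ?_⟩
    rw [hcase]
    group
  · have hg : R 1 ((f (ξ^k))⁻¹ * y) (f ξ) := by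
      have h2 := Rmull hR (f (ξ^k))⁻¹ harc
      have e1 : (f (ξ^k))⁻¹ * f (ξ^k) = 1 := by group
      have e3 : (f (ξ^k))⁻¹ * f (ξ^(k+1)) = f ξ := by
        rw [← map_inv, ← map_mul]
        congr 1
        rw [pow_succ, inv_mul_cancel_left]
      rwa [e1, e3] at h2
    set j : ℕ := k % M with hjdef
    set q : ℕ := k / M with hqdef
    have hkd : M * q + j = k := Nat.div_add_mod k M
    have hjM : j < M := Nat.mod_lt _ hM0
    by_cases hj0 : j = 0
    · refine ⟨ξ^k, ?_, Or.inr (Or.inl ?_)⟩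
      · rw [← pow_mul]
        have he : k * n = N * q := by rw [← hkd, hj0, hNdef]; ring
        rw [he, pow_mul, hK1, one_pow]
      · exact widen hR f hf hord hg (by rw [hξθ]; linarith)
    · by_cases hjM1 : j + 1 = M
      · refine ⟨ξ^(k+1), ?_, Or.inr (Or.inr ?_)⟩
        · rw [← pow_mul]
          have he1 : k+1 = M*(q+1) := by
            rw [← hkd, Nat.add_assoc, hjM1]; ring
          have he : (k+1) * n = N * (q+1) := by rw [he1, hNdef]; ring
          rw [he, pow_mul, hK1, one_pow]
        · have hs : R (f ξ)⁻¹ ((f (ξ^(k+1)))⁻¹ * y) 1 := by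
            have h2 := Rmull hR (f ξ)⁻¹ hg
            have e1 : (f ξ)⁻¹ * 1 = (f ξ)⁻¹ := by group
            have e2 : (f ξ)⁻¹ * ((f (ξ^k))⁻¹ * y) = (f (ξ^(k+1)))⁻¹ * y := by
              rw [pow_succ, map_mul]
              group
            have e3 : (f ξ)⁻¹ * f ξ = 1 := by group
            rwa [e1, e2, e3] at h2
          have h4 := inv_R hR hs
          rw [inv_one, inv_inv] at h4
          exact widen hR f hf hord h4 (by rw [hξθ]; linarith)
      · exfalso
        have hj1 : 1 ≤ j := by omega
        have hj2M : j + 2 ≤ M := by omega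
        have hxik : ((ξ^k)^n : U) = rU hU j M hM0 := by
          rw [← pow_mul]
          have hkn : k * n = N * q + j * n := by rw [← hkd, hNdef]; ring
          rw [hkn, pow_add, pow_mul, hK1, one_pow, one_mul, hξdef,
            rU_pow hU 1 N (j*n) hN0, show 1*(j*n) = j*n by omega]
          apply rU_eqR hU hN0 hM0
          rw [hNcast]
          have hnR0 : (0:ℝ) < n := by linarith
          push_cast
          field_simp
        have hE2 : (ξ^(2*n) : U) = rU hU 2 M hM0 := by
          rw [hξdef, rU_pow hU 1 N (2*n) hN0, show 1*(2*n) = 2*n by omega]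
          apply rU_eqR hU hN0 hM0
          rw [hNcast]
          have hnR0 : (0:ℝ) < n := by linarith
          push_cast
          field_simp
        rcases hxball with hx1 | hxp | hxm
        · -- y^n = 1 : impossible
          have hgy : f (ξ^k) * ((f (ξ^k))⁻¹ * y) = y := by group
          obtain ⟨Q, hQeq, hQlt⟩ := expand_left hR f hf hord n hn hg hbound (w := ξ^k)
          rw [hgy, hxik] at hQeq
          rw [hE2] at hQlt
          have harcx : R (f (rU hU j M hM0)) (y^n) (f (rU hU (j+2) M hM0)) := by
            have h2 := Rmull hR (f (rU hU j M hM0)) hQlt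
            rw [mul_one, ← hQeq, ← map_mul, rU_add hU hM0] at h2
            exact h2
          rw [hx1] at harcx
          rcases Nat.eq_or_lt_of_le hj2M with he | hlt2
          · rw [show rU hU (j+2) M hM0 = 1 by
                rw [show j+2 = M from he]; exact rU_self hU hM0, map_one] at harcx
            exact (hR.1 _ _ _ harcx).2.1 rfl
          · have hθj : thU (rU hU j M hM0) = 2*π*j/M := thU_rU hU hM0 (by omega)
            have hθj2 : thU (rU hU (j+2) M hM0) = 2*π*((j+2:ℕ):ℝ)/M := thU_rU hU hM0 (by omega)
            have ltEE : rlt R (f (rU hU j M hM0)) (f (rU hU (j+2) M hM0)) := by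
              refine (ltF hR f hf hord).2 ?_
              rw [hθj, hθj2, div_lt_div_iff_of_pos_right hMR]
              push_cast
              nlinarith [Real.pi_pos]
            rcases (tr hR).1 harcx with ⟨p, q⟩ | ⟨p, q⟩ | ⟨p, q⟩
            · exact absurd p (rlt_one_right hR)
            · exact absurd q (fun hh => rlt_asymm hR hh ltEE)
            · exact absurd p (fun hh => rlt_asymm hR hh ltEE)
        · -- Npos (y^n)
          have hgy : f (ξ^k) * ((f (ξ^k))⁻¹ * y) = y := by group
          obtain ⟨Q, hQeq, hQlt⟩ := expand_left hR f hf hord n hn hg hbound (w := ξ^k)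
          rw [hgy, hxik] at hQeq
          rw [hE2] at hQlt
          have harcx : R (f (rU hU j M hM0)) (y^n) (f (rU hU (j+2) M hM0)) := by
            have h2 := Rmull hR (f (rU hU j M hM0)) hQlt
            rw [mul_one, ← hQeq, ← map_mul, rU_add hU hM0] at h2
            exact h2
          exact sub_contra hR f hf hord hU hM8 hM0 hj1 hj2M harcx hxp
        · -- Npos (y^n)⁻¹
          have hgt : R 1 (f (ξ^(k+1)) * y⁻¹) (f ξ) := by
            have h2 := Rmull hR (f (ξ^(k+1))) (inv_R hR harc)
            have e1 : f (ξ^(k+1)) * (f (ξ^(k+1)))⁻¹ = 1 := by group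
            have e3 : f (ξ^(k+1)) * (f (ξ^k))⁻¹ = f ξ := by
              rw [← map_inv, ← map_mul]
              congr 1
              rw [pow_succ, mul_comm (ξ^k) ξ, mul_inv_cancel_right]
            rwa [e1, e3] at h2
          obtain ⟨Q', hQ'eq, hQ'lt⟩ :=
            expand_left hR f hf hord n hn hgt hbound (w := (ξ^(k+1))⁻¹)
          have hww : f ((ξ^(k+1))⁻¹) * (f (ξ^(k+1)) * y⁻¹) = y⁻¹ := by
            rw [map_inv]; group
          rw [hww] at hQ'eq
          have hj'eq : (((ξ^(k+1))⁻¹ : U)^n : U) = rU hU (M - (j+1)) M hM0 := by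
            rw [inv_pow, ← pow_mul]
            have hkn : (k+1) * n = N * q + (j+1) * n := by rw [← hkd, hNdef]; ring
            rw [hkn, pow_add, pow_mul, hK1, one_pow, one_mul, hξdef,
              rU_pow hU 1 N ((j+1)*n) hN0, show 1*((j+1)*n) = (j+1)*n by omega]
            rw [show rU hU ((j+1)*n) N hN0 = rU hU (j+1) M hM0 from by
              apply rU_eqR hU hN0 hM0
              rw [hNcast]
              have hnR0 : (0:ℝ) < n := by linarith
              push_cast
              field_simp]
            exact rU_inv hU hM0 (by omega)
          rw [hj'eq] at hQ'eq
          rw [hE2] at hQ'lt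
          have hxinv : (y^n)⁻¹ = (y⁻¹)^n := by rw [inv_pow]
          have harcx' : R (f (rU hU (M-(j+1)) M hM0)) ((y^n)⁻¹)
              (f (rU hU ((M-(j+1))+2) M hM0)) := by
            have h2 := Rmull hR (f (rU hU (M-(j+1)) M hM0)) hQ'lt
            rw [mul_one, ← hQ'eq, ← map_mul, rU_add hU hM0, ← hxinv] at h2
            exact h2
          exact sub_contra hR f hf hord hU hM8 hM0 (by omega) (by omega) harcx' hxm

include hU in
lemma root_theta_bounds {n : ℕ} (hn : 1 ≤ n) {δ : U} (hδn : δ^n = 1) (hδ : δ ≠ 1) :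
    2*π/n ≤ thU δ ∧ thU δ ≤ 2*π - 2*π/n := by
  have hθpos := thU_pos (u := δ) hδ
  have hθlt := thU_lt δ
  have hnR : (1:ℝ) ≤ (n:ℝ) := by exact_mod_cast hn
  have hcoe : ((δ : Circle))^n = 1 := by
    have := congrArg (fun (v : U) => (v : Circle)) hδn
    push_cast at this
    exact_mod_cast this
  have hexp : Circle.exp ((n:ℝ) * thU δ) = 1 := by
    rw [← exp_pow, show thU δ = circleTheta (δ:Circle) from rfl, exp_theta]
    exact hcoe
  obtain ⟨a, ha⟩ := Circle.exp_eq_one.1 hexp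
  have ha1 : (1:ℝ) ≤ (a:ℝ) := by
    have h0 : (0:ℝ) < (a:ℝ) * (2*π) := by rw [← ha]; positivity
    have : (0:ℝ) < (a:ℝ) := by nlinarith [Real.pi_pos]
    have : 0 < a := by exact_mod_cast this
    exact_mod_cast this
  have ha2 : (a:ℝ) ≤ (n:ℝ) - 1 := by
    have h0 : (a:ℝ) * (2*π) < (n:ℝ) * (2*π) := by rw [← ha]; nlinarith
    have h1 : (a:ℝ) < (n:ℝ) := by nlinarith [Real.pi_pos]
    have h2 : a < (n:ℤ) := by exact_mod_cast h1
    have h3 : a ≤ (n:ℤ) - 1 := by omega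
    have h4 : (a:ℝ) ≤ (((n:ℤ) - 1 : ℤ) : ℝ) := by exact_mod_cast h3
    push_cast at h4
    linarith
  have hnR0 : (0:ℝ) < n := by linarith
  constructor
  · rw [div_le_iff₀ hnR0]
    nlinarith [Real.pi_pos, ha, ha1]
  · have hθeq : thU δ = (a:ℝ) * (2*π) / n := by
      rw [eq_div_iff (ne_of_gt hnR0)]
      linear_combination ha
    have hdiv : 2*π/(n:ℝ)*n = 2*π := by field_simp
    rw [hθeq, div_le_iff₀ hnR0]
    nlinarith [Real.pi_pos, ha2, hdiv]

include hR hf hord hU in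
lemma zeta_unique (n : ℕ) (hn : 1 ≤ n) (y : G) {ζ ζ' : U} {ε : U}
    (hζn : ζ^n = 1) (hζ'n : ζ'^n = 1)
    (hε : thU ε = 2*π/(8*n))
    (hb : (f ζ)⁻¹ * y = 1 ∨ R 1 ((f ζ)⁻¹ * y) (f ε) ∨ R 1 ((f ζ)⁻¹ * y)⁻¹ (f ε))
    (hb' : (f ζ')⁻¹ * y = 1 ∨ R 1 ((f ζ')⁻¹ * y) (f ε) ∨ R 1 ((f ζ')⁻¹ * y)⁻¹ (f ε)) :
    ζ = ζ' := by
  by_contra hne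
  have hnR : (1:ℝ) ≤ (n:ℝ) := by exact_mod_cast hn
  have hn0 : (0:ℝ) < n := by linarith
  have hπ := Real.pi_pos
  set δ : U := ζ⁻¹ * ζ' with hδdef
  have hδ1 : δ ≠ 1 := by
    intro e
    rw [hδdef] at e
    exact hne (inv_mul_eq_one.1 e)
  have hδn : δ^n = 1 := by
    rw [hδdef, mul_pow, inv_pow, hζn, hζ'n]
    simp
  obtain ⟨hδlo, hδhi⟩ := root_theta_bounds hU hn hδn hδ1
  have hεpos : 0 < thU ε := by rw [hε]; positivity
  have hεne : ε ≠ 1 := fun e => by rw [e, thU_one] at hεpos; exact lt_irrefl _ hεpos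
  have h2ε : 2 * thU ε < 2*π/n := by
    rw [hε, show (2:ℝ)*(2*π/(8*(n:ℝ))) = π/(2*n) from by field_simp; ring]
    rw [div_lt_div_iff₀ (by positivity) hn0]
    nlinarith
  have hεδ : thU ε < thU δ := by linarith
  have hδinv : thU δ⁻¹ = 2*π - thU δ := thU_inv hδ1
  have hεinv : thU ε⁻¹ = 2*π - thU ε := thU_inv hεne
  have hss : (f ζ')⁻¹ * y = f δ⁻¹ * ((f ζ)⁻¹ * y) := by
    have h1 : f δ⁻¹ * (f ζ)⁻¹ = (f ζ')⁻¹ := by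
      rw [map_inv f δ, ← mul_inv_rev, ← map_mul f ζ δ,
        show (ζ * δ : U) = ζ' from by rw [hδdef]; group]
    rw [← mul_assoc, h1]
  set s : G := (f ζ)⁻¹ * y with hsdef
  rcases hb with hs1 | hsp | hsm
  · -- s = 1 : the other ball contains f δ⁻¹
    rw [hss, hs1, mul_one] at hb'
    rcases hb' with h' | h' | h'
    · exact hδ1 (by simpa using hf (h'.trans (map_one f).symm))
    · have := (ltF hR f hf hord).1 (rlt_of_R h')
      rw [hδinv] at this
      linarith
    · rw [show ((f δ⁻¹)⁻¹ : G) = f δ from by rw [← map_inv f δ⁻¹, inv_inv]] at h'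
      have := (ltF hR f hf hord).1 (rlt_of_R h')
      linarith
  · -- s ∈ (1, ε)
    have harc : R (f δ⁻¹) (f δ⁻¹ * s) (f (δ⁻¹ * ε)) := by
      have h2 := Rmull hR (f δ⁻¹) hsp
      rw [mul_one] at h2
      rw [show f δ⁻¹ * f ε = f (δ⁻¹ * ε) from (map_mul f δ⁻¹ ε).symm] at h2
      exact h2
    have hθde : thU (δ⁻¹ * ε) = (2*π - thU δ) + thU ε := by
      rw [thU_mul (by rw [hδinv]; linarith), hδinv]
    have ltdd : rlt R (f δ⁻¹) (f (δ⁻¹ * ε)) := by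
      refine (ltF hR f hf hord).2 ?_
      rw [hθde, hδinv]
      linarith
    have hd : rlt R (f δ⁻¹) (f δ⁻¹ * s) ∧ rlt R (f δ⁻¹ * s) (f (δ⁻¹ * ε)) := by
      rcases (tr hR).1 harc with ⟨p, q⟩ | ⟨p, q⟩ | ⟨p, q⟩
      · exact ⟨p, q⟩
      · exact absurd q (fun hh => rlt_asymm hR hh ltdd)
      · exact absurd p (fun hh => rlt_asymm hR hh ltdd)
    rw [hss] at hb'
    rcases hb' with h' | h' | h'
    · rw [h'] at hd
      exact rlt_one_right hR hd.1
    · have l1 : rlt R (f δ⁻¹ * s) (f ε) := rlt_of_R h'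
      have l2 : rlt R (f ε) (f δ⁻¹) := by
        refine (ltF hR f hf hord).2 ?_
        rw [hδinv]
        linarith
      exact rlt_ne hR (rlt_trans hR (rlt_trans hR l1 l2) hd.1) rfl
    · have l1 := inv_rlt hR h'
      rw [inv_inv, ← map_inv f ε] at l1
      have l2 : rlt R (f ε⁻¹) (f (δ⁻¹ * ε)) := rlt_trans hR (rlt_of_R l1) hd.2
      have := (ltF hR f hf hord).1 l2
      rw [hεinv, hθde] at this
      linarith
  · -- s⁻¹ ∈ (1, ε)
    have hinvR := inv_R hR hsm
    rw [inv_inv, inv_one] at hinvR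
    have hsum : thU ε + thU δ < 2*π := by linarith
    have hεδne : ε * δ ≠ 1 := by
      intro e
      have h2 := thU_mul (u := ε) (v := δ) hsum
      rw [e, thU_one] at h2
      linarith
    have hθde : thU (δ⁻¹ * ε⁻¹) = 2*π - thU δ - thU ε := by
      rw [show (δ⁻¹ * ε⁻¹ : U) = (ε * δ)⁻¹ from (mul_inv_rev ε δ).symm,
        thU_inv hεδne, thU_mul hsum]
      ring
    have harc : R (f (δ⁻¹ * ε⁻¹)) (f δ⁻¹ * s) (f δ⁻¹) := by
      have h2 := Rmull hR (f δ⁻¹) hinvR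
      rw [mul_one] at h2
      rw [show f δ⁻¹ * (f ε)⁻¹ = f (δ⁻¹ * ε⁻¹) from by
        rw [map_mul f δ⁻¹ ε⁻¹, map_inv f ε]] at h2
      exact h2
    have ltdd : rlt R (f (δ⁻¹ * ε⁻¹)) (f δ⁻¹) := by
      refine (ltF hR f hf hord).2 ?_
      rw [hθde, hδinv]
      linarith
    have hd : rlt R (f (δ⁻¹ * ε⁻¹)) (f δ⁻¹ * s) ∧ rlt R (f δ⁻¹ * s) (f δ⁻¹) := by
      rcases (tr hR).1 harc with ⟨p, q⟩ | ⟨p, q⟩ | ⟨p, q⟩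
      · exact ⟨p, q⟩
      · exact absurd q (fun hh => rlt_asymm hR hh ltdd)
      · exact absurd p (fun hh => rlt_asymm hR hh ltdd)
    rw [hss] at hb'
    rcases hb' with h' | h' | h'
    · rw [h'] at hd
      exact rlt_one_right hR hd.1
    · have l1 : rlt R (f δ⁻¹ * s) (f ε) := rlt_of_R h'
      have l2 : rlt R (f ε) (f (δ⁻¹ * ε⁻¹)) := by
        refine (ltF hR f hf hord).2 ?_
        rw [hθde]
        linarith
      exact rlt_ne hR (rlt_trans hR (rlt_trans hR l1 l2) hd.1) rfl
    · have l1 := inv_rlt hR h'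
      rw [inv_inv, ← map_inv f ε] at l1
      have l2 : rlt R (f ε⁻¹) (f δ⁻¹) := rlt_trans hR (rlt_of_R l1) hd.2
      have := (ltF hR f hf hord).1 l2
      rw [hεinv, hδinv] at this
      linarith

include hR hf hord hU in
lemma zeta_global (n : ℕ) (hn : 1 ≤ n) (y : G)
    (hxball : y^n = 1 ∨ Npos R f (y^n) ∨ Npos R f (y^n)⁻¹) :
    ∃ ζ : U, ζ^n = 1 ∧ ((f ζ)⁻¹ * y = 1 ∨ Npos R f ((f ζ)⁻¹ * y) ∨
      Npos R f ((f ζ)⁻¹ * y)⁻¹) := by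
  have hnR : (1:ℝ) ≤ (n:ℝ) := by exact_mod_cast hn
  have hπ := Real.pi_pos
  have h8n0 : 0 < 8*n := by omega
  set ε : U := rU hU 1 (8*n) h8n0 with hεdef
  have hεθ : thU ε = 2*π/(8*n) := by
    rw [hεdef, thU_rU hU h8n0 (by omega)]
    push_cast
    ring
  have hεpos : 0 < thU ε := by rw [hεθ]; positivity
  have hεπ : thU ε < π := by
    rw [hεθ, div_lt_iff₀ (by positivity)]
    nlinarith
  obtain ⟨ζ, hζn, hb⟩ := find_zeta hR f hf hord hU n hn y hxball ε hεpos hεπ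
  refine ⟨ζ, hζn, ?_⟩
  apply upgrade hR f hf hord hU
  intro u hu1 hu2
  obtain ⟨w, hw1, hw2, hw3⟩ := small_exists hU (min (thU u) (thU ε))
    (lt_min hu1 hεpos)
  obtain ⟨ζ₁, hζ₁n, hb₁⟩ := find_zeta hR f hf hord hU n hn y hxball w hw1 hw3
  -- widen the w-ball to the ε-ball
  have hwε : thU w ≤ thU ε := le_trans hw2 (min_le_right _ _)
  have hb₁ε : (f ζ₁)⁻¹ * y = 1 ∨ R 1 ((f ζ₁)⁻¹ * y) (f ε) ∨
      R 1 ((f ζ₁)⁻¹ * y)⁻¹ (f ε) := by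
    rcases hb₁ with h' | h' | h'
    · exact Or.inl h'
    · exact Or.inr (Or.inl (widen hR f hf hord h' hwε))
    · exact Or.inr (Or.inr (widen hR f hf hord h' hwε))
  have hζeq : ζ = ζ₁ := zeta_unique hR f hf hord hU n hn y hζn hζ₁n hεθ hb hb₁ε
  rw [hζeq]
  rcases hb₁ with h' | h' | h'
  · exact Or.inl h'
  · exact Or.inr (Or.inl (widen hR f hf hord h' (le_trans hw2 (min_le_left _ _))))
  · exact Or.inr (Or.inr (widen hR f hf hord h' (le_trans hw2 (min_le_left _ _))))

include hR hf hord in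
lemma ball_of_sandwich {d : G} {v u : U} (h : R (f v⁻¹) d (f v))
    (hv2 : thU v < π) (hvu : thU v ≤ thU u) :
    d = 1 ∨ R 1 d (f u) ∨ R 1 d⁻¹ (f u) := by
  have hθn := thU_nonneg v
  have hvne : v ≠ 1 := by
    intro e
    rw [e] at h
    simp only [inv_one, map_one] at h
    exact (hR.1 _ _ _ h).2.2 rfl
  have hv0 := thU_pos hvne
  have ltvvi : rlt R (f v) (f v⁻¹) := (ltF hR f hf hord).2 (by rw [thU_inv hvne]; linarith)
  rcases (tr hR).1 h with ⟨p, q⟩ | ⟨p, q⟩ | ⟨p, q⟩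
  · exact absurd (rlt_trans hR p q) (fun hh => rlt_asymm hR hh ltvvi)
  · rcases p with ⟨he, _⟩ | hr
    · exact Or.inl he
    · exact Or.inr (Or.inl (widen hR f hf hord hr hvu))
  · have hvine : f v⁻¹ ≠ 1 := f_ne_one f hf (by simpa using hvne)
    have h5 := inv_rlt hR (R_one_of_rlt hvine q)
    rw [show ((f v⁻¹)⁻¹ : G) = f v from by rw [← map_inv f v⁻¹, inv_inv]] at h5
    exact Or.inr (Or.inr (widen hR f hf hord h5 hvu))

include hR hf hord in
lemma mixed {a b : G} {v u : U} (ha : R 1 a (f v)) (hb : R 1 b⁻¹ (f v))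
    (hvu : 2 * thU v ≤ thU u) (hu2 : thU u < π) :
    a*b = 1 ∨ R 1 (a*b) (f u) ∨ R 1 (a*b)⁻¹ (f u) := by
  have hvne : v ≠ 1 := by
    intro e; rw [e, map_one] at ha; exact (hR.1 _ _ _ ha).2.2 rfl
  have hv0 := thU_pos (u := v) hvne
  have hπ := Real.pi_pos
  have hv2 : thU v < π := by linarith
  have hθvv : thU (v*v) = 2 * thU v := by rw [thU_mul (by linarith)]; ring
  have ltv_vv : rlt R (f v) (f (v*v)) := (ltF hR f hf hord).2 (by rw [hθvv]; linarith)
  have F1 : R (f v) (f v * a) (f (v*v)) := by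
    have h2 := Rmull hR (f v) ha
    rwa [mul_one, show f v * f v = f (v*v) from (map_mul f v v).symm] at h2
  have d2 : rlt R (f v) (f v * a) ∧ rlt R (f v * a) (f (v*v)) := by
    rcases (tr hR).1 F1 with ⟨p, q⟩ | ⟨p, q⟩ | ⟨p, q⟩
    · exact ⟨p, q⟩
    · exact absurd q (fun hh => rlt_asymm hR hh ltv_vv)
    · exact absurd p (fun hh => rlt_asymm hR hh ltv_vv)
  have F2 : R (f v)⁻¹ b 1 := by
    have h3 := inv_R hR hb
    rwa [inv_inv, inv_one] at h3
  have hfvb : R 1 (f v * b) (f v) := by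
    have h2 := Rmull hR (f v) F2
    rwa [show f v * (f v)⁻¹ = (1:G) from by group, mul_one] at h2
  have hfv2b : R (f v) (f (v*v) * b) (f (v*v)) := by
    have h2 := Rmull hR (f (v*v)) F2
    rwa [show f (v*v) * (f v)⁻¹ = f v from by
      rw [← map_inv f v, ← map_mul f (v*v) v⁻¹, show ((v*v)*v⁻¹ : U) = v from by group],
      mul_one] at h2
  have dv2b : rlt R (f v) (f (v*v) * b) ∧ rlt R (f (v*v) * b) (f (v*v)) := by
    rcases (tr hR).1 hfv2b with ⟨p, q⟩ | ⟨p, q⟩ | ⟨p, q⟩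
    · exact ⟨p, q⟩
    · exact absurd q (fun hh => rlt_asymm hR hh ltv_vv)
    · exact absurd p (fun hh => rlt_asymm hR hh ltv_vv)
  have lfvb : rlt R (f v * b) (f v) := rlt_of_R hfvb
  have lkey : rlt R (f v * b) (f (v*v) * b) := rlt_trans hR lfvb dv2b.1
  have F3 : R (f v * b) (f v * a * b) (f (v*v) * b) := by
    have h2 := Rmulr hR b F1
    exact h2
  have d3 : rlt R (f v * b) (f v * a * b) ∧ rlt R (f v * a * b) (f (v*v) * b) := by
    rcases (tr hR).1 F3 with ⟨p, q⟩ | ⟨p, q⟩ | ⟨p, q⟩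
    · exact ⟨p, q⟩
    · exact absurd q (fun hh => rlt_asymm hR hh lkey)
    · exact absurd p (fun hh => rlt_asymm hR hh lkey)
  have hne1 : f v * a * b ≠ 1 := rlt_ne_one hR d3.1
  have hlt2 : rlt R (f v * a * b) (f (v*v)) := rlt_trans hR d3.2 dv2b.2
  have hmain : R 1 (f v * a * b) (f (v*v)) := R_one_of_rlt hne1 hlt2
  have hfinal : R (f v⁻¹) (a * b) (f v) := by
    have h2 := Rmull hR (f v)⁻¹ hmain
    rwa [mul_one, show (f v)⁻¹ * (f v * a * b) = a * b from by group,
      show (f v)⁻¹ * f (v*v) = f v from by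
        rw [← map_inv f v, ← map_mul f v⁻¹ (v*v), show (v⁻¹*(v*v) : U) = v from by group],
      show ((f v)⁻¹ : G) = f v⁻¹ from (map_inv f v).symm] at h2
  exact ball_of_sandwich hR f hf hord hfinal hv2 (by linarith)

include hR hf hord in
lemma mixed2 {a b : G} {v u : U} (ha : R 1 a⁻¹ (f v)) (hb : R 1 b (f v))
    (hvu : 2 * thU v ≤ thU u) (hu2 : thU u < π) :
    a*b = 1 ∨ R 1 (a*b) (f u) ∨ R 1 (a*b)⁻¹ (f u) := by
  have hvne : v ≠ 1 := by
    intro e; rw [e, map_one] at hb; exact (hR.1 _ _ _ hb).2.2 rfl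
  have hv0 := thU_pos (u := v) hvne
  have hπ := Real.pi_pos
  have hv2 : thU v < π := by linarith
  have hθvv : thU (v*v) = 2 * thU v := by rw [thU_mul (by linarith)]; ring
  have ltv_vv : rlt R (f v) (f (v*v)) := (ltF hR f hf hord).2 (by rw [hθvv]; linarith)
  have F2 : R (f v)⁻¹ a 1 := by
    have h3 := inv_R hR ha
    rwa [inv_inv, inv_one] at h3
  have hafv : R 1 (a * f v) (f v) := by
    have h2 := Rmulr hR (f v) F2
    rwa [show (f v)⁻¹ * f v = (1:G) from by group, one_mul] at h2
  have hafv2 : R (f v) (a * f (v*v)) (f (v*v)) := by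
    have h2 := Rmulr hR (f (v*v)) F2
    rwa [show (f v)⁻¹ * f (v*v) = f v from by
      rw [← map_inv f v, ← map_mul f v⁻¹ (v*v), show (v⁻¹*(v*v) : U) = v from by group],
      one_mul] at h2
  have dafv2 : rlt R (f v) (a * f (v*v)) ∧ rlt R (a * f (v*v)) (f (v*v)) := by
    rcases (tr hR).1 hafv2 with ⟨p, q⟩ | ⟨p, q⟩ | ⟨p, q⟩
    · exact ⟨p, q⟩
    · exact absurd q (fun hh => rlt_asymm hR hh ltv_vv)
    · exact absurd p (fun hh => rlt_asymm hR hh ltv_vv)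
  have F1 : R (f v) (b * f v) (f (v*v)) := by
    have h2 := Rmulr hR (f v) hb
    rwa [one_mul, show f v * f v = f (v*v) from (map_mul f v v).symm] at h2
  have lafv : rlt R (a * f v) (f v) := rlt_of_R hafv
  have lkey : rlt R (a * f v) (a * f (v*v)) := rlt_trans hR lafv dafv2.1
  have F3 : R (a * f v) (a * (b * f v)) (a * f (v*v)) := Rmull hR a F1
  have d3 : rlt R (a * f v) (a * (b * f v)) ∧ rlt R (a * (b * f v)) (a * f (v*v)) := by
    rcases (tr hR).1 F3 with ⟨p, q⟩ | ⟨p, q⟩ | ⟨p, q⟩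
    · exact ⟨p, q⟩
    · exact absurd q (fun hh => rlt_asymm hR hh lkey)
    · exact absurd p (fun hh => rlt_asymm hR hh lkey)
  have hne1 : a * (b * f v) ≠ 1 := rlt_ne_one hR d3.1
  have hlt2 : rlt R (a * (b * f v)) (f (v*v)) := rlt_trans hR d3.2 dafv2.2
  have hmain : R 1 (a * (b * f v)) (f (v*v)) := R_one_of_rlt hne1 hlt2
  have hfinal : R (f v⁻¹) (a * b) (f v) := by
    have h2 := Rmulr hR (f v)⁻¹ hmain
    rwa [one_mul, show a * (b * f v) * (f v)⁻¹ = a * b from by group,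
      show f (v*v) * (f v)⁻¹ = f v from by
        rw [← map_inv f v, ← map_mul f (v*v) v⁻¹, show ((v*v)*v⁻¹ : U) = v from by group],
      show ((f v)⁻¹ : G) = f v⁻¹ from (map_inv f v).symm] at h2
  exact ball_of_sandwich hR f hf hord hfinal hv2 (by linarith)

include hR hf hord hU in
lemma comm_zeta (n : ℕ) (hn : 1 ≤ n) {ζ : U} (hζn : ζ^n = 1) {s : G}
    (hs : s = 1 ∨ Npos R f s ∨ Npos R f s⁻¹) : f ζ * s = s * f ζ := by
  rcases hs with rfl | hs
  · rw [mul_one, one_mul]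
  set c := s * f ζ * s⁻¹ * (f ζ)⁻¹ with hcdef
  have hcball : c = 1 ∨ Npos R f c ∨ Npos R f c⁻¹ := by
    apply upgrade hR f hf hord hU
    intro u hu1 hu2
    obtain ⟨v, hv1, hv2, hv3⟩ := small_exists hU (thU u / 2) (by linarith)
    have hvu : 2 * thU v ≤ thU u := by linarith
    rcases hs with hsp | hsm
    · have ha : R 1 s (f v) := hsp v hv1 hv3
      have hb' : R 1 (f ζ * s⁻¹ * (f ζ)⁻¹)⁻¹ (f v) := by
        rw [show (f ζ * s⁻¹ * (f ζ)⁻¹)⁻¹ = f ζ * s * (f ζ)⁻¹ from by group]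
        exact conj_presR hR f hf hord ha
      have hm := mixed hR f hf hord ha hb' hvu hu2
      rwa [show s * (f ζ * s⁻¹ * (f ζ)⁻¹) = c from by rw [hcdef]; group] at hm
    · have ha' : R 1 s⁻¹ (f v) := hsm v hv1 hv3
      have hb' : R 1 (f ζ * s⁻¹ * (f ζ)⁻¹) (f v) := conj_presR hR f hf hord ha'
      have hm := mixed2 hR f hf hord (a := s) ha' hb' hvu hu2
      rwa [show s * (f ζ * s⁻¹ * (f ζ)⁻¹) = c from by rw [hcdef]; group] at hm
  have hπ := Real.pi_pos
  have hnR : (1:ℝ) ≤ (n:ℝ) := by exact_mod_cast hn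
  have h8n0 : 0 < 8*n := by omega
  set ε : U := rU hU 1 (8*n) h8n0 with hεdef
  have hεθ : thU ε = 2*π/(8*n) := by
    rw [hεdef, thU_rU hU h8n0 (by omega)]
    push_cast
    ring
  have hεpos : 0 < thU ε := by rw [hεθ]; positivity
  have hεπ : thU ε < π := by
    rw [hεθ, div_lt_iff₀ (by positivity)]
    nlinarith
  have hbound : (2*(n:ℝ)) * thU ε < 2*π := by
    rw [hεθ, show (2*(n:ℝ))*(2*π/(8*n)) = π/2 from by field_simp; ring]
    nlinarith
  have htn : (c * f ζ)^n = 1 := by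
    have h1 : c * f ζ = s * f ζ * s⁻¹ := by rw [hcdef]; group
    rw [h1, ← MulAut.conj_apply s (f ζ), ← map_pow (MulAut.conj s) (f ζ) n,
      ← map_pow f ζ n, hζn, map_one f, map_one]
  rcases hcball with hc1 | hcp | hcm
  · have h3 : s * f ζ * s⁻¹ = f ζ := mul_inv_eq_one.mp hc1
    exact (mul_inv_eq_iff_eq_mul.mp h3).symm
  · exfalso
    have hcε : R 1 c (f ε) := hcp ε hεpos hεπ
    obtain ⟨Q, hQeq, hQlt⟩ := expand_right hR f hf hord n hn hcε hbound (w := ζ)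
    rw [htn, hζn, map_one, mul_one] at hQeq
    exact (hR.1 _ _ _ hQlt).1 hQeq
  · exfalso
    have hcε : R 1 c⁻¹ (f ε) := hcm ε hεpos hεπ
    obtain ⟨Q, hQeq, hQlt⟩ := expand_left hR f hf hord n hn hcε hbound (w := ζ⁻¹)
    rw [show f ζ⁻¹ * c⁻¹ = (c * f ζ)⁻¹ from by rw [map_inv f ζ]; group,
      inv_pow, htn, inv_one] at hQeq
    rw [show ((ζ⁻¹ : U)^n : U) = 1 from by rw [inv_pow, hζn, inv_one],
      map_one, one_mul] at hQeq
    exact (hR.1 _ _ _ hQlt).1 hQeq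

include hR hf hord hU hconv in
lemma pos_root_mem (n : ℕ) (hn2 : 2 ≤ n) {s : G} (hsp : Npos R f s)
    (hxC : s^n ∈ C) : s ∈ C := by
  have hπ := Real.pi_pos
  have hnR : (2:ℝ) ≤ (n:ℝ) := by exact_mod_cast hn2
  have h80 : (0:ℕ) < 8 := by omega
  set v : U := rU hU 1 8 h80 with hvdef
  have hvθ : thU v = 2*π/8 := by
    rw [hvdef, thU_rU hU h80 (by omega)]
    push_cast
    ring
  have hv1 : 0 < thU v := by rw [hvθ]; positivity
  have hvπ : thU v < π := by rw [hvθ]; nlinarith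
  have h8n0 : 0 < 8*n := by omega
  set ε : U := rU hU 1 (8*n) h8n0 with hεdef
  have hεθ : thU ε = 2*π/(8*n) := by
    rw [hεdef, thU_rU hU h8n0 (by omega)]
    push_cast
    ring
  have hε1 : 0 < thU ε := by rw [hεθ]; positivity
  have hεπ : thU ε < π := by
    rw [hεθ, div_lt_iff₀ (by positivity)]
    nlinarith
  have hbound : (2*(n:ℝ)) * thU ε < 2*π := by
    rw [hεθ, show (2*(n:ℝ))*(2*π/(8*n)) = π/2 from by field_simp; ring]
    nlinarith
  have hsε : R 1 s (f ε) := hsp ε hε1 hεπ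
  obtain ⟨Q, hQeq, hQlt⟩ := expand_left hR f hf hord n (by omega) hsε hbound (w := (1:U))
  rw [map_one, one_mul, one_pow, map_one, one_mul] at hQeq
  rw [← hQeq] at hQlt
  -- hQlt : R 1 (s^n) (f (ε^(2*n)))
  have hθpow : thU (ε^(2*n)) = π/2 := by
    rw [hεdef, rU_pow hU 1 (8*n) (2*n) h8n0, thU_rU hU h8n0 (by omega)]
    have hn0 : ((8*n:ℕ):ℝ) ≠ 0 := by positivity
    push_cast at hn0 ⊢
    have hnne : (n:ℝ) ≠ 0 := by intro e; rw [e] at hnR; norm_num at hnR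
    field_simp
    ring
  -- bound s^(n-1)
  have h16n0 : 0 < 16*n := by omega
  set ε2 : U := rU hU 1 (16*n) h16n0 with hε2def
  have hε2θ : thU ε2 = 2*π/(16*n) := by
    rw [hε2def, thU_rU hU h16n0 (by omega)]
    push_cast
    ring
  have hε21 : 0 < thU ε2 := by rw [hε2θ]; positivity
  have hε2π : thU ε2 < π := by
    rw [hε2θ, div_lt_iff₀ (by positivity)]
    nlinarith
  have hbound2 : (2*((n-1:ℕ):ℝ)) * thU ε2 < 2*π := by
    rw [hε2θ]
    have h1 : ((n-1:ℕ):ℝ) ≤ (n:ℝ) := by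
      have : (n-1:ℕ) ≤ n := by omega
      exact_mod_cast this
    have h2 : (0:ℝ) ≤ ((n-1:ℕ):ℝ) := by positivity
    rw [show (2*((n-1:ℕ):ℝ))*(2*π/(16*n)) = ((n-1:ℕ):ℝ) * π/(4*n) from by
      field_simp; ring]
    rw [div_lt_iff₀ (by positivity)]
    nlinarith
  have hsε2 : R 1 s (f ε2) := hsp ε2 hε21 hε2π
  obtain ⟨Q2, hQ2eq, hQ2lt⟩ :=
    expand_left hR f hf hord (n-1) (by omega) hsε2 hbound2 (w := (1:U))
  rw [map_one, one_mul, one_pow, map_one, one_mul] at hQ2eq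
  rw [← hQ2eq] at hQ2lt
  have hsn1 : R 1 (s^(n-1)) (f v) := by
    refine widen hR f hf hord hQ2lt ?_
    rw [hε2def, rU_pow hU 1 (16*n) (2*(n-1)) h16n0, thU_rU hU h16n0 (by omega), hvθ]
    have hc1 : ((1*(2*(n-1)):ℕ):ℝ) = 2*((n:ℝ)-1) := by
      have h1n : (1:ℕ) ≤ n := by omega
      push_cast [Nat.cast_sub h1n]
      ring
    have hc2 : ((16*n:ℕ):ℝ) = 16*(n:ℝ) := by push_cast; ring
    rw [hc1, hc2, div_le_div_iff₀ (by positivity) (by norm_num)]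
    nlinarith
  -- chain : rlt s (s^n)
  have hsv : R 1 s (f v) := hsp v hv1 hvπ
  have hθvv : thU (v*v) = 2 * thU v := by
    rw [thU_mul (by rw [hvθ]; nlinarith)]
    ring
  have ltv_vv : rlt R (f v) (f (v*v)) := (ltF hR f hf hord).2 (by rw [hθvv]; linarith)
  have F1 : R s (s * s^(n-1)) (s * f v) := by
    have h2 := Rmull hR s hsn1
    rwa [mul_one] at h2
  have F2 : R (f v) (s * f v) (f (v*v)) := by
    have h2 := Rmulr hR (f v) hsv
    rwa [one_mul, show f v * f v = f (v*v) from (map_mul f v v).symm] at h2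
  have d2 : rlt R (f v) (s * f v) ∧ rlt R (s * f v) (f (v*v)) := by
    rcases (tr hR).1 F2 with ⟨p, q⟩ | ⟨p, q⟩ | ⟨p, q⟩
    · exact ⟨p, q⟩
    · exact absurd q (fun hh => rlt_asymm hR hh ltv_vv)
    · exact absurd p (fun hh => rlt_asymm hR hh ltv_vv)
  have lsfv : rlt R s (f v) := rlt_of_R hsv
  have hchain : rlt R s (s * s^(n-1)) := by
    rcases (tr hR).1 F1 with ⟨p, q⟩ | ⟨p, q⟩ | ⟨p, q⟩
    · exact p
    · exact absurd (rlt_trans hR d2.1 q) (fun hh => rlt_asymm hR hh lsfv)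
    · exact q
  have hss : s * s^(n-1) = s^n := by
    rw [← pow_succ' s (n-1)]
    congr 1
    omega
  rw [hss] at hchain
  -- pivot
  have hxne : s^n ≠ 1 := by
    intro e
    rw [e] at hQlt
    exact (hR.1 _ _ _ hQlt).1 rfl
  have hpowne : (ε^(2*n) : U) ≠ 1 := by
    intro e
    rw [e, thU_one] at hθpow
    nlinarith
  have hinv1 := inv_rlt hR hQlt
  rw [← map_inv f (ε^(2*n))] at hinv1
  have lt1 : rlt R (s^n) (f (ε^(2*n))) := rlt_of_R hQlt
  have lt2 : rlt R (f (ε^(2*n))) (f ((ε^(2*n))⁻¹)) :=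
    (ltF hR f hf hord).2 (by rw [thU_inv hpowne, hθpow]; nlinarith)
  have lt3 : rlt R (f ((ε^(2*n))⁻¹)) ((s^n)⁻¹) := rlt_of_R hinv1
  have ltx : rlt R (s^n) ((s^n)⁻¹) := rlt_trans hR (rlt_trans hR lt1 lt2) lt3
  have hpiv : R ((s^n)⁻¹) 1 (s^n) := (tr hR).2 (Or.inr (Or.inl ⟨rlt_one_left hxne, ltx⟩))
  have hsne : s ≠ 1 := by
    intro e
    rw [e] at hsv
    exact (hR.1 _ _ _ hsv).1 rfl
  exact hconv (s^n) hxC s hpiv (R_one_of_rlt hsne hchain)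

end nball
end CCP

/-- If a cyclically ordered group `(G,R)` contains a copy of the group `U` of
all roots of unity with its cyclic order inherited from `K`, then every
c-convex subgroup `C` of `G` is pure in `G`. -/
theorem cconvex_pure_of_contains_roots_of_unity {G : Type*} [Group G]
    (R : G → G → G → Prop) (hR : IsCyclicOrder R)
    (U : Subgroup Circle) (hU : ∀ u : Circle, u ∈ U ↔ ∃ n : ℕ, 0 < n ∧ u ^ n = 1)
    (f : U →* G) (hf : Function.Injective f)
    (hord : ∀ a b c : U, circleR (a : Circle) (b : Circle) (c : Circle) ↔
      R (f a) (f b) (f c))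
    (C : Subgroup G) (hC : IsCConvex R C) :
    ∀ x ∈ C, ∀ n : ℕ, ∀ y : G, y ^ n = x → ∃ y' ∈ C, y' ^ n = x := by
  intro x hx n y hyx
  rcases hC with hC | ⟨hCne, h2t, hconv⟩
  · refine ⟨y, ?_, hyx⟩
    rw [hC]
    exact Subgroup.mem_top y
  · rcases Nat.eq_zero_or_pos n with hn0 | hn1
    · subst hn0
      rw [pow_zero] at hyx
      refine ⟨1, one_mem C, ?_⟩
      rw [pow_zero]
      exact hyx
    · rcases Nat.eq_or_lt_of_le hn1 with hn1' | hn2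
      · refine ⟨x, hx, ?_⟩
        rw [← hn1', pow_one]
      · have hn2' : 2 ≤ n := hn2
        subst hyx
        have hxball := CCP.C_ball hR f hf hord hU C h2t hconv hCne (y^n) hx
        obtain ⟨ζ, hζn, hsball⟩ := CCP.zeta_global hR f hf hord hU n hn1 y hxball
        set s : G := (f ζ)⁻¹ * y with hsdef
        have hcomm' : Commute (f ζ) s :=
          CCP.comm_zeta hR f hf hord hU n hn1 hζn hsball
        have hys : y = f ζ * s := by rw [hsdef]; group
        have hsn : s^n = y^n := by
          rw [hys, hcomm'.mul_pow, ← map_pow f ζ n, hζn, map_one, one_mul]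
        rcases hsball with hs1 | hsp | hsm
        · refine ⟨1, one_mem C, ?_⟩
          rw [one_pow, ← hsn, hs1, one_pow]
        · refine ⟨s, ?_, hsn⟩
          exact CCP.pos_root_mem hR f hf hord hU C hconv n hn2' hsp
            (by rw [hsn]; exact hx)
        · refine ⟨s, ?_, hsn⟩
          have h1 : (s⁻¹)^n = (y^n)⁻¹ := by rw [inv_pow, hsn]
          have h2 : s⁻¹ ∈ C := CCP.pos_root_mem hR f hf hord hU C hconv n hn2' hsm
            (by rw [h1]; exact inv_mem hx)
          simpa using inv_mem h2
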